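/- arXiv:1312.5266 — 11 statements merged into one kernel-verified Lean document; each statement's English description precedes it below -/
import Mathlib

section
/- Let n ≥ 1, let Ω ⊆ ℝⁿ be open, and let u₀ ∈ Ω. Suppose v : Ω → Matrix (Fin n) (Fin n) ℝ, λ : Ω → ℝ and h : Ω → ℝ are such that λ and h are differentiable at u₀, that ξ ∈ ℝⁿ satisfies v(u₀) ξ = λ(u₀) ξ, that h(u₀) ≠ 0, and that the covector identity Dh(u₀)(v(u₀) w) = h(u₀) · Dλ(u₀)(w) + λ(u₀) · Dh(u₀)(w) holds for every w ∈ ℝⁿ (where Dh(u₀), Dλ(u₀) denote the Fréchet derivatives at u₀). Then Dλ(u₀)(ξ) = 0, i.e. the characteristic speed λ is linearly degenerate in the direction of the eigenvector ξ at u₀. -/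
/-- For a hydrodynamic type system `u_t = v(u) u_x`, the existence of a characteristic
integral `h(u)(dx + λ dt)` (encoded by the covector identity
`Dh(u₀)(v(u₀) w) = h(u₀) Dλ(u₀)(w) + λ(u₀) Dh(u₀)(w)`) in a characteristic direction
implies that the corresponding characteristic speed `λ` is linearly degenerate:
`Dλ(u₀)(ξ) = 0` for the eigenvector `ξ` of `v(u₀)` with eigenvalue `λ(u₀)`. -/
theorem characteristic_integral_implies_linear_degeneracy_2d
    (n : ℕ) (hn : 1 ≤ n) (Ω : Set (Fin n → ℝ)) (hΩ : IsOpen Ω)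
    (u₀ : Fin n → ℝ) (hu₀ : u₀ ∈ Ω)
    (v : (Fin n → ℝ) → Matrix (Fin n) (Fin n) ℝ)
    (lam h : (Fin n → ℝ) → ℝ)
    (hlam : DifferentiableAt ℝ lam u₀) (hh : DifferentiableAt ℝ h u₀)
    (ξ : Fin n → ℝ) (hξ : (v u₀).mulVec ξ = lam u₀ • ξ)
    (hh0 : h u₀ ≠ 0)
    (hcov : ∀ w : Fin n → ℝ,
      fderiv ℝ h u₀ ((v u₀).mulVec w)
        = h u₀ * fderiv ℝ lam u₀ w + lam u₀ * fderiv ℝ h u₀ w) :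
    fderiv ℝ lam u₀ ξ = 0 := by
  have := hcov ξ
  rw [hξ, map_smul, smul_eq_mul] at this
  have : h u₀ * fderiv ℝ lam u₀ ξ = 0 := by linarith
  exact (mul_eq_zero.mp this).resolve_left hh0
end

section
/- Let Ω ⊆ ℝ³ be open and let f : Ω → Matrix (Fin 3) (Fin 3) ℝ be continuously differentiable with f(p) symmetric and invertible for every p ∈ Ω. Let F : Ω → ℝ³ be continuously differentiable and s : Ω → ℝ be such that for all p ∈ Ω and all indices i, j: (∂F_i/∂p_j)(p) + (∂F_j/∂p_i)(p) = 2 s(p) f(p)_{ij}, and suppose the characteristic condition ∑_{i,j} (f(p)⁻¹)_{ij} F_i(p) F_j(p) = 0 holds for all p ∈ Ω. Define G(p) := f(p)⁻¹ F(p) ∈ ℝ³. Then for every p ∈ Ω one has ∑_{i,j,k} (∂f_{ij}/∂p_k)(p) · G_i(p) G_j(p) G_k(p) = 0. -/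
open Matrix

set_option maxHeartbeats 2000000 in
/-- If the fluxes `F` of a conservation law of a 3D quasilinear second-order PDE with
symmetric invertible symbol `f(p)` satisfy `F_{(i,j)} = s f_{ij}` and the characteristic
condition `∑ (f⁻¹)_{ij} F_i F_j = 0`, then the cubic condition
`∑ f_{ij,k} G_i G_j G_k = 0` holds for `G = f⁻¹ F`. -/
theorem characteristic_implies_cubic_condition
    (Ω : Set (Fin 3 → ℝ)) (hΩ : IsOpen Ω)
    (f : (Fin 3 → ℝ) → Matrix (Fin 3) (Fin 3) ℝ)
    (hf : ∀ i j : Fin 3, ContDiffOn ℝ 1 (fun q => f q i j) Ω)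
    (hsymm : ∀ p ∈ Ω, (f p).IsSymm)
    (hinv : ∀ p ∈ Ω, IsUnit (f p).det)
    (F : (Fin 3 → ℝ) → (Fin 3 → ℝ))
    (hF : ∀ i : Fin 3, ContDiffOn ℝ 1 (fun q => F q i) Ω)
    (s : (Fin 3 → ℝ) → ℝ)
    (hFs : ∀ p ∈ Ω, ∀ i j : Fin 3,
      fderiv ℝ (fun q => F q i) p (Pi.single j 1)
        + fderiv ℝ (fun q => F q j) p (Pi.single i 1) = 2 * s p * f p i j)
    (hchar : ∀ p ∈ Ω, ∑ i : Fin 3, ∑ j : Fin 3, (f p)⁻¹ i j * F p i * F p j = 0) :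
    ∀ p ∈ Ω, ∑ i : Fin 3, ∑ j : Fin 3, ∑ k : Fin 3,
      fderiv ℝ (fun q => f q i j) p (Pi.single k 1)
        * ((f p)⁻¹ *ᵥ F p) i * ((f p)⁻¹ *ᵥ F p) j * ((f p)⁻¹ *ᵥ F p) k = 0 := by
  intro p hp
  have hpn : Ω ∈ nhds p := hΩ.mem_nhds hp
  have hfd : ∀ i j, DifferentiableAt ℝ (fun q => f q i j) p := fun i j =>
    ((hf i j).differentiableOn one_ne_zero).differentiableAt hpn
  have hFd : ∀ i, DifferentiableAt ℝ (fun q => F q i) p := fun i =>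
    ((hF i).differentiableOn one_ne_zero).differentiableAt hpn
  have hdet : DifferentiableAt ℝ (fun q => (f q).det) p := by
    simp only [Matrix.det_fin_three]; fun_prop
  have hdetne : (f p).det ≠ 0 := (hinv p hp).ne_zero
  have hadj : ∀ i j, DifferentiableAt ℝ (fun q => (f q).adjugate i j) p := by
    intro i j
    simp only [Matrix.adjugate_fin_succ_eq_det_submatrix, Matrix.det_fin_two,
      Matrix.submatrix_apply]
    fun_prop
  have hinvE : ∀ i j, DifferentiableAt ℝ (fun q => (f q)⁻¹ i j) p := by
    intro i j
    have h1 : (fun q => (f q)⁻¹ i j) = fun q => ((f q).det)⁻¹ * (f q).adjugate i j := by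
      funext q; rw [Matrix.inv_def, Ring.inverse_eq_inv']; simp [Matrix.smul_apply]
    rw [h1]
    exact (hdet.inv hdetne).mul (hadj i j)
  have hGeq : ∀ i, (fun q => ((f q)⁻¹ *ᵥ F q) i) = fun q => ∑ j, (f q)⁻¹ i j * F q j := by
    intro i; funext q; simp [Matrix.mulVec, dotProduct]
  have hGd : ∀ i, DifferentiableAt ℝ (fun q => ((f q)⁻¹ *ᵥ F q) i) p := by
    intro i; rw [hGeq i]
    exact DifferentiableAt.fun_sum fun j _ => (hinvE i j).mul (hFd j)
  -- pointwise identities on Ω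
  have hmv : ∀ q ∈ Ω, f q *ᵥ ((f q)⁻¹ *ᵥ F q) = F q := by
    intro q hq
    rw [Matrix.mulVec_mulVec, Matrix.mul_nonsing_inv _ (hinv q hq), Matrix.one_mulVec]
  have hK : ∀ q ∈ Ω, ∑ i, F q i * ((f q)⁻¹ *ᵥ F q) i = 0 := by
    intro q hq
    have h := hchar q hq
    simp only [Matrix.mulVec, dotProduct, Fin.sum_univ_three] at h ⊢
    linear_combination h
  have hH : ∀ q ∈ Ω, ∑ i, ∑ j, f q i j * ((f q)⁻¹ *ᵥ F q) i * ((f q)⁻¹ *ᵥ F q) j = 0 := by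
    intro q hq
    have h0 := hK q hq
    have hmvq := hmv q hq
    set g : Fin 3 → ℝ := (f q)⁻¹ *ᵥ F q with hg
    have e0 := congrFun hmvq 0
    have e1 := congrFun hmvq 1
    have e2 := congrFun hmvq 2
    simp only [Matrix.mulVec, dotProduct, Fin.sum_univ_three] at e0 e1 e2
    simp only [Fin.sum_univ_three] at h0 ⊢
    linear_combination g 0 * e0 + g 1 * e1 + g 2 * e2 + h0
  -- derivative identities
  have hKz : (fun q => ∑ i, F q i * ((f q)⁻¹ *ᵥ F q) i) =ᶠ[nhds p] (fun _ => (0:ℝ)) := by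
    filter_upwards [hpn] with q hq using hK q hq
  have hKder : HasFDerivAt (fun q => ∑ i : Fin 3, F q i * ((f q)⁻¹ *ᵥ F q) i)
      (∑ i : Fin 3, (F p i • fderiv ℝ (fun q => ((f q)⁻¹ *ᵥ F q) i) p
        + ((f p)⁻¹ *ᵥ F p) i • fderiv ℝ (fun q => F q i) p)) p :=
    HasFDerivAt.fun_sum fun i _ => ((hFd i).hasFDerivAt.fun_mul ((hGd i).hasFDerivAt))
  have hKsum : (∑ i : Fin 3, (F p i • fderiv ℝ (fun q => ((f q)⁻¹ *ᵥ F q) i) p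
        + ((f p)⁻¹ *ᵥ F p) i • fderiv ℝ (fun q => F q i) p)) = 0 := by
    rw [← hKder.fderiv, Filter.EventuallyEq.fderiv_eq hKz, fderiv_const_apply]
  have hI : ∀ k : Fin 3, ∑ i : Fin 3,
      (F p i * fderiv ℝ (fun q => ((f q)⁻¹ *ᵥ F q) i) p (Pi.single k 1)
        + ((f p)⁻¹ *ᵥ F p) i * fderiv ℝ (fun q => F q i) p (Pi.single k 1)) = 0 := by
    intro k
    have h := congrArg (fun L : (Fin 3 → ℝ) →L[ℝ] ℝ => L (Pi.single k 1)) hKsum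
    simpa [ContinuousLinearMap.sum_apply, ContinuousLinearMap.add_apply,
      ContinuousLinearMap.coe_smul', Pi.smul_apply, smul_eq_mul] using h
  have hHz : (fun q => ∑ i, ∑ j, f q i j * ((f q)⁻¹ *ᵥ F q) i * ((f q)⁻¹ *ᵥ F q) j)
      =ᶠ[nhds p] (fun _ => (0:ℝ)) := by
    filter_upwards [hpn] with q hq using hH q hq
  have hHder : HasFDerivAt
      (fun q => ∑ i : Fin 3, ∑ j : Fin 3, f q i j * ((f q)⁻¹ *ᵥ F q) i * ((f q)⁻¹ *ᵥ F q) j)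
      (∑ i : Fin 3, ∑ j : Fin 3,
        ((f p i j * ((f p)⁻¹ *ᵥ F p) i) • fderiv ℝ (fun q => ((f q)⁻¹ *ᵥ F q) j) p
          + ((f p)⁻¹ *ᵥ F p) j • (f p i j • fderiv ℝ (fun q => ((f q)⁻¹ *ᵥ F q) i) p
              + ((f p)⁻¹ *ᵥ F p) i • fderiv ℝ (fun q => f q i j) p))) p :=
    HasFDerivAt.fun_sum fun i _ => HasFDerivAt.fun_sum fun j _ =>
      (((hfd i j).hasFDerivAt.fun_mul ((hGd i).hasFDerivAt)).fun_mul ((hGd j).hasFDerivAt))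
  have hHsum : (∑ i : Fin 3, ∑ j : Fin 3,
        ((f p i j * ((f p)⁻¹ *ᵥ F p) i) • fderiv ℝ (fun q => ((f q)⁻¹ *ᵥ F q) j) p
          + ((f p)⁻¹ *ᵥ F p) j • (f p i j • fderiv ℝ (fun q => ((f q)⁻¹ *ᵥ F q) i) p
              + ((f p)⁻¹ *ᵥ F p) i • fderiv ℝ (fun q => f q i j) p))) = 0 := by
    rw [← hHder.fderiv, Filter.EventuallyEq.fderiv_eq hHz, fderiv_const_apply]
  have hII : ∀ k : Fin 3, ∑ i : Fin 3, ∑ j : Fin 3,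
      ((f p i j * ((f p)⁻¹ *ᵥ F p) i)
          * fderiv ℝ (fun q => ((f q)⁻¹ *ᵥ F q) j) p (Pi.single k 1)
        + ((f p)⁻¹ *ᵥ F p) j
          * (f p i j * fderiv ℝ (fun q => ((f q)⁻¹ *ᵥ F q) i) p (Pi.single k 1)
            + ((f p)⁻¹ *ᵥ F p) i * fderiv ℝ (fun q => f q i j) p (Pi.single k 1))) = 0 := by
    intro k
    have h := congrArg (fun L : (Fin 3 → ℝ) →L[ℝ] ℝ => L (Pi.single k 1)) hHsum
    simpa [ContinuousLinearMap.sum_apply, ContinuousLinearMap.add_apply,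
      ContinuousLinearMap.coe_smul', Pi.smul_apply, smul_eq_mul, mul_add, add_mul] using h
  -- scalar facts at p
  have hE : ∀ i : Fin 3, f p i 0 * ((f p)⁻¹ *ᵥ F p) 0 + f p i 1 * ((f p)⁻¹ *ᵥ F p) 1
      + f p i 2 * ((f p)⁻¹ *ᵥ F p) 2 = F p i := by
    intro i
    have h := congrFun (hmv p hp) i
    simpa [Matrix.mulVec, dotProduct, Fin.sum_univ_three] using h
  have hS := (hsymm p hp).apply
  have hFS := hFs p hp
  have hHp := hH p hp
  simp only [Fin.sum_univ_three] at hHp hI hII ⊢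
  linear_combination (norm := ring_nf)
      ((f p)⁻¹ *ᵥ F p) 0 * hII 0
      + ((f p)⁻¹ *ᵥ F p) 1 * hII 1
      + ((f p)⁻¹ *ᵥ F p) 2 * hII 2
      + (- (((f p)⁻¹ *ᵥ F p) 0 * (fderiv ℝ (fun q => ((f q)⁻¹ *ᵥ F q) (0 : Fin 3)) p (Pi.single (0 : Fin 3) 1)))) * hE 0
      + (- (((f p)⁻¹ *ᵥ F p) 0 * (fderiv ℝ (fun q => ((f q)⁻¹ *ᵥ F q) (1 : Fin 3)) p (Pi.single (0 : Fin 3) 1)))) * hE 1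
      + (- (((f p)⁻¹ *ᵥ F p) 0 * (fderiv ℝ (fun q => ((f q)⁻¹ *ᵥ F q) (2 : Fin 3)) p (Pi.single (0 : Fin 3) 1)))) * hE 2
      + (- (((f p)⁻¹ *ᵥ F p) 1 * (fderiv ℝ (fun q => ((f q)⁻¹ *ᵥ F q) (0 : Fin 3)) p (Pi.single (1 : Fin 3) 1)))) * hE 0
      + (- (((f p)⁻¹ *ᵥ F p) 1 * (fderiv ℝ (fun q => ((f q)⁻¹ *ᵥ F q) (1 : Fin 3)) p (Pi.single (1 : Fin 3) 1)))) * hE 1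
      + (- (((f p)⁻¹ *ᵥ F p) 1 * (fderiv ℝ (fun q => ((f q)⁻¹ *ᵥ F q) (2 : Fin 3)) p (Pi.single (1 : Fin 3) 1)))) * hE 2
      + (- (((f p)⁻¹ *ᵥ F p) 2 * (fderiv ℝ (fun q => ((f q)⁻¹ *ᵥ F q) (0 : Fin 3)) p (Pi.single (2 : Fin 3) 1)))) * hE 0
      + (- (((f p)⁻¹ *ᵥ F p) 2 * (fderiv ℝ (fun q => ((f q)⁻¹ *ᵥ F q) (1 : Fin 3)) p (Pi.single (2 : Fin 3) 1)))) * hE 1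
      + (- (((f p)⁻¹ *ᵥ F p) 2 * (fderiv ℝ (fun q => ((f q)⁻¹ *ᵥ F q) (2 : Fin 3)) p (Pi.single (2 : Fin 3) 1)))) * hE 2
      + (- (((f p)⁻¹ *ᵥ F p) 0 * (fderiv ℝ (fun q => ((f q)⁻¹ *ᵥ F q) (0 : Fin 3)) p (Pi.single (0 : Fin 3) 1)))) * hE 0
      + (- (((f p)⁻¹ *ᵥ F p) 0 * (fderiv ℝ (fun q => ((f q)⁻¹ *ᵥ F q) (1 : Fin 3)) p (Pi.single (0 : Fin 3) 1)))) * hE 1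
      + (- (((f p)⁻¹ *ᵥ F p) 0 * (fderiv ℝ (fun q => ((f q)⁻¹ *ᵥ F q) (2 : Fin 3)) p (Pi.single (0 : Fin 3) 1)))) * hE 2
      + (- (((f p)⁻¹ *ᵥ F p) 1 * (fderiv ℝ (fun q => ((f q)⁻¹ *ᵥ F q) (0 : Fin 3)) p (Pi.single (1 : Fin 3) 1)))) * hE 0
      + (- (((f p)⁻¹ *ᵥ F p) 1 * (fderiv ℝ (fun q => ((f q)⁻¹ *ᵥ F q) (1 : Fin 3)) p (Pi.single (1 : Fin 3) 1)))) * hE 1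
      + (- (((f p)⁻¹ *ᵥ F p) 1 * (fderiv ℝ (fun q => ((f q)⁻¹ *ᵥ F q) (2 : Fin 3)) p (Pi.single (1 : Fin 3) 1)))) * hE 2
      + (- (((f p)⁻¹ *ᵥ F p) 2 * (fderiv ℝ (fun q => ((f q)⁻¹ *ᵥ F q) (0 : Fin 3)) p (Pi.single (2 : Fin 3) 1)))) * hE 0
      + (- (((f p)⁻¹ *ᵥ F p) 2 * (fderiv ℝ (fun q => ((f q)⁻¹ *ᵥ F q) (1 : Fin 3)) p (Pi.single (2 : Fin 3) 1)))) * hE 1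
      + (- (((f p)⁻¹ *ᵥ F p) 2 * (fderiv ℝ (fun q => ((f q)⁻¹ *ᵥ F q) (2 : Fin 3)) p (Pi.single (2 : Fin 3) 1)))) * hE 2
      + (((f p)⁻¹ *ᵥ F p) 0 * (fderiv ℝ (fun q => ((f q)⁻¹ *ᵥ F q) (0 : Fin 3)) p (Pi.single (0 : Fin 3) 1)) * ((f p)⁻¹ *ᵥ F p) 0) * hS 0 0
      + (((f p)⁻¹ *ᵥ F p) 0 * (fderiv ℝ (fun q => ((f q)⁻¹ *ᵥ F q) (1 : Fin 3)) p (Pi.single (0 : Fin 3) 1)) * ((f p)⁻¹ *ᵥ F p) 0) * hS 0 1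
      + (((f p)⁻¹ *ᵥ F p) 0 * (fderiv ℝ (fun q => ((f q)⁻¹ *ᵥ F q) (2 : Fin 3)) p (Pi.single (0 : Fin 3) 1)) * ((f p)⁻¹ *ᵥ F p) 0) * hS 0 2
      + (((f p)⁻¹ *ᵥ F p) 0 * (fderiv ℝ (fun q => ((f q)⁻¹ *ᵥ F q) (0 : Fin 3)) p (Pi.single (0 : Fin 3) 1)) * ((f p)⁻¹ *ᵥ F p) 1) * hS 1 0
      + (((f p)⁻¹ *ᵥ F p) 0 * (fderiv ℝ (fun q => ((f q)⁻¹ *ᵥ F q) (1 : Fin 3)) p (Pi.single (0 : Fin 3) 1)) * ((f p)⁻¹ *ᵥ F p) 1) * hS 1 1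
      + (((f p)⁻¹ *ᵥ F p) 0 * (fderiv ℝ (fun q => ((f q)⁻¹ *ᵥ F q) (2 : Fin 3)) p (Pi.single (0 : Fin 3) 1)) * ((f p)⁻¹ *ᵥ F p) 1) * hS 1 2
      + (((f p)⁻¹ *ᵥ F p) 0 * (fderiv ℝ (fun q => ((f q)⁻¹ *ᵥ F q) (0 : Fin 3)) p (Pi.single (0 : Fin 3) 1)) * ((f p)⁻¹ *ᵥ F p) 2) * hS 2 0
      + (((f p)⁻¹ *ᵥ F p) 0 * (fderiv ℝ (fun q => ((f q)⁻¹ *ᵥ F q) (1 : Fin 3)) p (Pi.single (0 : Fin 3) 1)) * ((f p)⁻¹ *ᵥ F p) 2) * hS 2 1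
      + (((f p)⁻¹ *ᵥ F p) 0 * (fderiv ℝ (fun q => ((f q)⁻¹ *ᵥ F q) (2 : Fin 3)) p (Pi.single (0 : Fin 3) 1)) * ((f p)⁻¹ *ᵥ F p) 2) * hS 2 2
      + (((f p)⁻¹ *ᵥ F p) 1 * (fderiv ℝ (fun q => ((f q)⁻¹ *ᵥ F q) (0 : Fin 3)) p (Pi.single (1 : Fin 3) 1)) * ((f p)⁻¹ *ᵥ F p) 0) * hS 0 0
      + (((f p)⁻¹ *ᵥ F p) 1 * (fderiv ℝ (fun q => ((f q)⁻¹ *ᵥ F q) (1 : Fin 3)) p (Pi.single (1 : Fin 3) 1)) * ((f p)⁻¹ *ᵥ F p) 0) * hS 0 1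
      + (((f p)⁻¹ *ᵥ F p) 1 * (fderiv ℝ (fun q => ((f q)⁻¹ *ᵥ F q) (2 : Fin 3)) p (Pi.single (1 : Fin 3) 1)) * ((f p)⁻¹ *ᵥ F p) 0) * hS 0 2
      + (((f p)⁻¹ *ᵥ F p) 1 * (fderiv ℝ (fun q => ((f q)⁻¹ *ᵥ F q) (0 : Fin 3)) p (Pi.single (1 : Fin 3) 1)) * ((f p)⁻¹ *ᵥ F p) 1) * hS 1 0
      + (((f p)⁻¹ *ᵥ F p) 1 * (fderiv ℝ (fun q => ((f q)⁻¹ *ᵥ F q) (1 : Fin 3)) p (Pi.single (1 : Fin 3) 1)) * ((f p)⁻¹ *ᵥ F p) 1) * hS 1 1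
      + (((f p)⁻¹ *ᵥ F p) 1 * (fderiv ℝ (fun q => ((f q)⁻¹ *ᵥ F q) (2 : Fin 3)) p (Pi.single (1 : Fin 3) 1)) * ((f p)⁻¹ *ᵥ F p) 1) * hS 1 2
      + (((f p)⁻¹ *ᵥ F p) 1 * (fderiv ℝ (fun q => ((f q)⁻¹ *ᵥ F q) (0 : Fin 3)) p (Pi.single (1 : Fin 3) 1)) * ((f p)⁻¹ *ᵥ F p) 2) * hS 2 0
      + (((f p)⁻¹ *ᵥ F p) 1 * (fderiv ℝ (fun q => ((f q)⁻¹ *ᵥ F q) (1 : Fin 3)) p (Pi.single (1 : Fin 3) 1)) * ((f p)⁻¹ *ᵥ F p) 2) * hS 2 1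
      + (((f p)⁻¹ *ᵥ F p) 1 * (fderiv ℝ (fun q => ((f q)⁻¹ *ᵥ F q) (2 : Fin 3)) p (Pi.single (1 : Fin 3) 1)) * ((f p)⁻¹ *ᵥ F p) 2) * hS 2 2
      + (((f p)⁻¹ *ᵥ F p) 2 * (fderiv ℝ (fun q => ((f q)⁻¹ *ᵥ F q) (0 : Fin 3)) p (Pi.single (2 : Fin 3) 1)) * ((f p)⁻¹ *ᵥ F p) 0) * hS 0 0
      + (((f p)⁻¹ *ᵥ F p) 2 * (fderiv ℝ (fun q => ((f q)⁻¹ *ᵥ F q) (1 : Fin 3)) p (Pi.single (2 : Fin 3) 1)) * ((f p)⁻¹ *ᵥ F p) 0) * hS 0 1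
      + (((f p)⁻¹ *ᵥ F p) 2 * (fderiv ℝ (fun q => ((f q)⁻¹ *ᵥ F q) (2 : Fin 3)) p (Pi.single (2 : Fin 3) 1)) * ((f p)⁻¹ *ᵥ F p) 0) * hS 0 2
      + (((f p)⁻¹ *ᵥ F p) 2 * (fderiv ℝ (fun q => ((f q)⁻¹ *ᵥ F q) (0 : Fin 3)) p (Pi.single (2 : Fin 3) 1)) * ((f p)⁻¹ *ᵥ F p) 1) * hS 1 0
      + (((f p)⁻¹ *ᵥ F p) 2 * (fderiv ℝ (fun q => ((f q)⁻¹ *ᵥ F q) (1 : Fin 3)) p (Pi.single (2 : Fin 3) 1)) * ((f p)⁻¹ *ᵥ F p) 1) * hS 1 1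
      + (((f p)⁻¹ *ᵥ F p) 2 * (fderiv ℝ (fun q => ((f q)⁻¹ *ᵥ F q) (2 : Fin 3)) p (Pi.single (2 : Fin 3) 1)) * ((f p)⁻¹ *ᵥ F p) 1) * hS 1 2
      + (((f p)⁻¹ *ᵥ F p) 2 * (fderiv ℝ (fun q => ((f q)⁻¹ *ᵥ F q) (0 : Fin 3)) p (Pi.single (2 : Fin 3) 1)) * ((f p)⁻¹ *ᵥ F p) 2) * hS 2 0
      + (((f p)⁻¹ *ᵥ F p) 2 * (fderiv ℝ (fun q => ((f q)⁻¹ *ᵥ F q) (1 : Fin 3)) p (Pi.single (2 : Fin 3) 1)) * ((f p)⁻¹ *ᵥ F p) 2) * hS 2 1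
      + (((f p)⁻¹ *ᵥ F p) 2 * (fderiv ℝ (fun q => ((f q)⁻¹ *ᵥ F q) (2 : Fin 3)) p (Pi.single (2 : Fin 3) 1)) * ((f p)⁻¹ *ᵥ F p) 2) * hS 2 2
      + (-2 * ((f p)⁻¹ *ᵥ F p) 0) * hI 0
      + (-2 * ((f p)⁻¹ *ᵥ F p) 1) * hI 1
      + (-2 * ((f p)⁻¹ *ᵥ F p) 2) * hI 2
      + (((f p)⁻¹ *ᵥ F p) 0 * ((f p)⁻¹ *ᵥ F p) 0) * hFS 0 0
      + (((f p)⁻¹ *ᵥ F p) 0 * ((f p)⁻¹ *ᵥ F p) 1) * hFS 0 1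
      + (((f p)⁻¹ *ᵥ F p) 0 * ((f p)⁻¹ *ᵥ F p) 2) * hFS 0 2
      + (((f p)⁻¹ *ᵥ F p) 1 * ((f p)⁻¹ *ᵥ F p) 0) * hFS 1 0
      + (((f p)⁻¹ *ᵥ F p) 1 * ((f p)⁻¹ *ᵥ F p) 1) * hFS 1 1
      + (((f p)⁻¹ *ᵥ F p) 1 * ((f p)⁻¹ *ᵥ F p) 2) * hFS 1 2
      + (((f p)⁻¹ *ᵥ F p) 2 * ((f p)⁻¹ *ᵥ F p) 0) * hFS 2 0
      + (((f p)⁻¹ *ᵥ F p) 2 * ((f p)⁻¹ *ᵥ F p) 1) * hFS 2 1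
      + (((f p)⁻¹ *ᵥ F p) 2 * ((f p)⁻¹ *ᵥ F p) 2) * hFS 2 2
      + (2 * s p) * hHp
end

section
/- Let μ, ν, η be real numbers with μ + ν + η = 0, and let u : ℝ³ → ℝ be twice continuously differentiable in (x,y,t) satisfying μ u_t u_{xy} + ν u_y u_{xt} + η u_x u_{yt} = 0 at every point, with u_x, u_y, u_t nowhere vanishing. Then the following four conservation laws hold at every point: (1) η ∂_x(u_y u_t) + ν ∂_y(u_x u_t) + μ ∂_t(u_x u_y) = 0; (2) ν ∂_x(u_y/u_t) + η ∂_y(u_x/u_t) = 0; (3) μ ∂_x(u_t/u_y) + η ∂_t(u_x/u_y) = 0; (4) μ ∂_y(u_t/u_x) + ν ∂_t(u_y/u_x) = 0. -/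
/-- Partial derivative with respect to the first variable `x`. -/
noncomputable def pdx (f : ℝ × ℝ × ℝ → ℝ) (p : ℝ × ℝ × ℝ) : ℝ :=
  deriv (fun s => f (s, p.2.1, p.2.2)) p.1

/-- Partial derivative with respect to the second variable `y`. -/
noncomputable def pdy (f : ℝ × ℝ × ℝ → ℝ) (p : ℝ × ℝ × ℝ) : ℝ :=
  deriv (fun s => f (p.1, s, p.2.2)) p.2.1

/-- Partial derivative with respect to the third variable `t`. -/
noncomputable def pdt (f : ℝ × ℝ × ℝ → ℝ) (p : ℝ × ℝ × ℝ) : ℝ :=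
  deriv (fun s => f (p.1, p.2.1, s)) p.2.2

namespace VW

lemma lineX (y t x : ℝ) : HasDerivAt (fun s : ℝ => (s, y, t)) ((1:ℝ), (0:ℝ), (0:ℝ)) x :=
  HasDerivAt.prodMk (hasDerivAt_id x) (hasDerivAt_const x (y, t))

lemma lineY (x t y : ℝ) : HasDerivAt (fun s : ℝ => (x, s, t)) ((0:ℝ), (1:ℝ), (0:ℝ)) y :=
  HasDerivAt.prodMk (hasDerivAt_const y x) (HasDerivAt.prodMk (hasDerivAt_id y) (hasDerivAt_const y t))

lemma lineT (x y t : ℝ) : HasDerivAt (fun s : ℝ => (x, y, s)) ((0:ℝ), (0:ℝ), (1:ℝ)) t :=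
  HasDerivAt.prodMk (hasDerivAt_const t x) (HasDerivAt.prodMk (hasDerivAt_const t y) (hasDerivAt_id t))

lemma pdx_eq (f : ℝ × ℝ × ℝ → ℝ) (p : ℝ × ℝ × ℝ) (hf : DifferentiableAt ℝ f p) :
    pdx f p = fderiv ℝ f p (1, 0, 0) :=
  (hf.hasFDerivAt.comp_hasDerivAt p.1 (lineX p.2.1 p.2.2 p.1)).deriv

lemma pdy_eq (f : ℝ × ℝ × ℝ → ℝ) (p : ℝ × ℝ × ℝ) (hf : DifferentiableAt ℝ f p) :
    pdy f p = fderiv ℝ f p (0, 1, 0) :=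
  (hf.hasFDerivAt.comp_hasDerivAt p.2.1 (lineY p.1 p.2.2 p.2.1)).deriv

lemma pdt_eq (f : ℝ × ℝ × ℝ → ℝ) (p : ℝ × ℝ × ℝ) (hf : DifferentiableAt ℝ f p) :
    pdt f p = fderiv ℝ f p (0, 0, 1) :=
  (hf.hasFDerivAt.comp_hasDerivAt p.2.2 (lineT p.1 p.2.1 p.2.2)).deriv

lemma diffX (f : ℝ × ℝ × ℝ → ℝ) (hf : Differentiable ℝ f) (p : ℝ × ℝ × ℝ) :
    DifferentiableAt ℝ (fun s => f (s, p.2.1, p.2.2)) p.1 :=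
  (hf _).comp p.1 (lineX p.2.1 p.2.2 p.1).differentiableAt

lemma diffY (f : ℝ × ℝ × ℝ → ℝ) (hf : Differentiable ℝ f) (p : ℝ × ℝ × ℝ) :
    DifferentiableAt ℝ (fun s => f (p.1, s, p.2.2)) p.2.1 :=
  (hf _).comp p.2.1 (lineY p.1 p.2.2 p.2.1).differentiableAt

lemma diffT (f : ℝ × ℝ × ℝ → ℝ) (hf : Differentiable ℝ f) (p : ℝ × ℝ × ℝ) :
    DifferentiableAt ℝ (fun s => f (p.1, p.2.1, s)) p.2.2 :=
  (hf _).comp p.2.2 (lineT p.1 p.2.1 p.2.2).differentiableAt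

lemma pdx_mul (f g : ℝ × ℝ × ℝ → ℝ) (hf : Differentiable ℝ f) (hg : Differentiable ℝ g)
    (p : ℝ × ℝ × ℝ) :
    pdx (fun q => f q * g q) p = pdx f p * g p + f p * pdx g p :=
  deriv_mul (diffX f hf p) (diffX g hg p)

lemma pdy_mul (f g : ℝ × ℝ × ℝ → ℝ) (hf : Differentiable ℝ f) (hg : Differentiable ℝ g)
    (p : ℝ × ℝ × ℝ) :
    pdy (fun q => f q * g q) p = pdy f p * g p + f p * pdy g p :=
  deriv_mul (diffY f hf p) (diffY g hg p)

lemma pdt_mul (f g : ℝ × ℝ × ℝ → ℝ) (hf : Differentiable ℝ f) (hg : Differentiable ℝ g)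
    (p : ℝ × ℝ × ℝ) :
    pdt (fun q => f q * g q) p = pdt f p * g p + f p * pdt g p :=
  deriv_mul (diffT f hf p) (diffT g hg p)

lemma pdx_div (f g : ℝ × ℝ × ℝ → ℝ) (hf : Differentiable ℝ f) (hg : Differentiable ℝ g)
    (p : ℝ × ℝ × ℝ) (h0 : g p ≠ 0) :
    pdx (fun q => f q / g q) p = (pdx f p * g p - f p * pdx g p) / (g p) ^ 2 :=
  deriv_div (diffX f hf p) (diffX g hg p) h0

lemma pdy_div (f g : ℝ × ℝ × ℝ → ℝ) (hf : Differentiable ℝ f) (hg : Differentiable ℝ g)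
    (p : ℝ × ℝ × ℝ) (h0 : g p ≠ 0) :
    pdy (fun q => f q / g q) p = (pdy f p * g p - f p * pdy g p) / (g p) ^ 2 :=
  deriv_div (diffY f hf p) (diffY g hg p) h0

lemma pdt_div (f g : ℝ × ℝ × ℝ → ℝ) (hf : Differentiable ℝ f) (hg : Differentiable ℝ g)
    (p : ℝ × ℝ × ℝ) (h0 : g p ≠ 0) :
    pdt (fun q => f q / g q) p = (pdt f p * g p - f p * pdt g p) / (g p) ^ 2 :=
  deriv_div (diffT f hf p) (diffT g hg p) h0

lemma fderiv_clm_apply_const (u : ℝ × ℝ × ℝ → ℝ) (hg : Differentiable ℝ (fderiv ℝ u))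
    (v : ℝ × ℝ × ℝ) (p w : ℝ × ℝ × ℝ) :
    fderiv ℝ (fun q => fderiv ℝ u q v) p w = fderiv ℝ (fderiv ℝ u) p w v := by
  have h : HasFDerivAt (fun q => fderiv ℝ u q v)
      ((ContinuousLinearMap.apply ℝ ℝ v).comp (fderiv ℝ (fderiv ℝ u) p)) p :=
    ((ContinuousLinearMap.apply ℝ ℝ v).hasFDerivAt).comp p (hg p).hasFDerivAt
  rw [h.fderiv]; rfl

end VW

/-- The four first-order conservation laws of the Veronese web equation
`μ u_t u_{xy} + ν u_y u_{xt} + η u_x u_{yt} = 0`, `μ + ν + η = 0`. -/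
theorem veronese_web_equation_conservation_laws
    (μ ν η : ℝ) (hμνη : μ + ν + η = 0)
    (u : ℝ × ℝ × ℝ → ℝ) (hu : ContDiff ℝ 2 u)
    (heq : ∀ p : ℝ × ℝ × ℝ,
      μ * pdt u p * pdy (pdx u) p + ν * pdy u p * pdt (pdx u) p
        + η * pdx u p * pdt (pdy u) p = 0)
    (hx : ∀ p : ℝ × ℝ × ℝ, pdx u p ≠ 0)
    (hy : ∀ p : ℝ × ℝ × ℝ, pdy u p ≠ 0)
    (ht : ∀ p : ℝ × ℝ × ℝ, pdt u p ≠ 0) :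
    (∀ p : ℝ × ℝ × ℝ,
      η * pdx (fun q => pdy u q * pdt u q) p + ν * pdy (fun q => pdx u q * pdt u q) p
        + μ * pdt (fun q => pdx u q * pdy u q) p = 0) ∧
    (∀ p : ℝ × ℝ × ℝ,
      ν * pdx (fun q => pdy u q / pdt u q) p + η * pdy (fun q => pdx u q / pdt u q) p = 0) ∧
    (∀ p : ℝ × ℝ × ℝ,
      μ * pdx (fun q => pdt u q / pdy u q) p + η * pdt (fun q => pdx u q / pdy u q) p = 0) ∧
    (∀ p : ℝ × ℝ × ℝ,
      μ * pdy (fun q => pdt u q / pdx u q) p + ν * pdt (fun q => pdy u q / pdx u q) p = 0) := by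
  have hd : Differentiable ℝ u := hu.differentiable (by norm_num)
  have hfd : ContDiff ℝ 1 (fderiv ℝ u) := hu.fderiv_right (by norm_num)
  have hg : Differentiable ℝ (fderiv ℝ u) := hfd.differentiable (by norm_num)
  have hP : ∀ v, Differentiable ℝ (fun q => fderiv ℝ u q v) :=
    fun v => hg.clm_apply (differentiable_const v)
  have hax : pdx u = fun q => fderiv ℝ u q (1, 0, 0) := funext fun q => VW.pdx_eq u q (hd q)
  have hay : pdy u = fun q => fderiv ℝ u q (0, 1, 0) := funext fun q => VW.pdy_eq u q (hd q)
  have hat : pdt u = fun q => fderiv ℝ u q (0, 0, 1) := funext fun q => VW.pdt_eq u q (hd q)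
  have hPx : Differentiable ℝ (pdx u) := by rw [hax]; exact hP _
  have hPy : Differentiable ℝ (pdy u) := by rw [hay]; exact hP _
  have hPt : Differentiable ℝ (pdt u) := by rw [hat]; exact hP _
  have hsymm : ∀ (p v w : ℝ × ℝ × ℝ),
      fderiv ℝ (fderiv ℝ u) p v w = fderiv ℝ (fderiv ℝ u) p w v :=
    fun p v w => second_derivative_symmetric (fun y => (hd y).hasFDerivAt)
      ((hg p).hasFDerivAt) v w
  set F := fderiv ℝ (fderiv ℝ u) with hF
  -- the six mixed second partials, all in canonical order
  have hxy : ∀ p, pdx (pdy u) p = F p (1,0,0) (0,1,0) := fun p => by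
    rw [hay, VW.pdx_eq _ p (hP _ p), VW.fderiv_clm_apply_const u hg]
  have hyx : ∀ p, pdy (pdx u) p = F p (1,0,0) (0,1,0) := fun p => by
    rw [hax, VW.pdy_eq _ p (hP _ p), VW.fderiv_clm_apply_const u hg]; exact hsymm p _ _
  have hxt : ∀ p, pdx (pdt u) p = F p (1,0,0) (0,0,1) := fun p => by
    rw [hat, VW.pdx_eq _ p (hP _ p), VW.fderiv_clm_apply_const u hg]
  have htx : ∀ p, pdt (pdx u) p = F p (1,0,0) (0,0,1) := fun p => by
    rw [hax, VW.pdt_eq _ p (hP _ p), VW.fderiv_clm_apply_const u hg]; exact hsymm p _ _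
  have hyt : ∀ p, pdy (pdt u) p = F p (0,1,0) (0,0,1) := fun p => by
    rw [hat, VW.pdy_eq _ p (hP _ p), VW.fderiv_clm_apply_const u hg]
  have hty : ∀ p, pdt (pdy u) p = F p (0,1,0) (0,0,1) := fun p => by
    rw [hay, VW.pdt_eq _ p (hP _ p), VW.fderiv_clm_apply_const u hg]; exact hsymm p _ _
  have heq' : ∀ p, μ * pdt u p * F p (1,0,0) (0,1,0) + ν * pdy u p * F p (1,0,0) (0,0,1)
      + η * pdx u p * F p (0,1,0) (0,0,1) = 0 := fun p => by
    rw [← hyx, ← htx, ← hty]; exact heq p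
  have hη : η = -μ - ν := by linarith
  subst hη
  refine ⟨fun p => ?_, fun p => ?_, fun p => ?_, fun p => ?_⟩
  · rw [VW.pdx_mul (pdy u) (pdt u) hPy hPt p, VW.pdy_mul (pdx u) (pdt u) hPx hPt p,
      VW.pdt_mul (pdx u) (pdy u) hPx hPy p, hxy p, hyx p, hxt p, htx p, hyt p, hty p]
    linear_combination (-1 : ℝ) * heq' p
  · rw [VW.pdx_div (pdy u) (pdt u) hPy hPt p (ht p), VW.pdy_div (pdx u) (pdt u) hPx hPt p (ht p),
      hxy p, hyx p, hxt p, hyt p]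
    field_simp [ht p]
    linear_combination (-1 : ℝ) * heq' p
  · rw [VW.pdx_div (pdt u) (pdy u) hPt hPy p (hy p), VW.pdt_div (pdx u) (pdy u) hPx hPy p (hy p),
      hxt p, hxy p, htx p, hty p]
    field_simp [hy p]
    linear_combination (-1 : ℝ) * heq' p
  · rw [VW.pdy_div (pdt u) (pdx u) hPt hPx p (hx p), VW.pdt_div (pdy u) (pdx u) hPy hPx p (hx p),
      hyt p, hyx p, hty p, htx p]
    field_simp [hx p]
    linear_combination (-1 : ℝ) * heq' p
end

section
/- Let μ, ν, η be nonzero real numbers with μ + ν + η = 0. For all real p₁, p₂, p₃ with p₁ p₂ p₃ ≠ 0 and all real α, β, γ, δ, set J₁ = α², J₂ = β²/(4νη), J₃ = δ²/(4ημ), J₄ = γ²/(4νμ), J₅ = αβ, J₆ = αδ, J₇ = αγ, J₈ = −βδ/(2η), J₉ = −βγ/(2ν), J₁₀ = −δγ/(2μ), and define F₁ = J₁ η p₂ p₃ + J₂ ν p₂/p₃ + J₃ μ p₃/p₂ − J₅ p₂ + J₆ p₃ + J₈, F₂ = J₁ ν p₁ p₃ + J₂ η p₁/p₃ + J₄ μ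 p₃/p₁ + J₅ p₁ − J₇ p₃ + J₉, F₃ = J₁ μ p₁ p₂ + J₃ η p₁/p₂ + J₄ ν p₂/p₁ − J₆ p₁ + J₇ p₂ + J₁₀. Let g be the symmetric matrix with g₁₁ = g₂₂ = g₃₃ = 0, g₁₂ = μ p₃, g₁₃ = ν p₂, g₂₃ = η p₁. Then F · adj(g) · Fᵀ = 0, where adj denotes the adjugate matrix. -/
open Matrix
set_option maxHeartbeats 2000000 in

/-- The characteristic integrals of the equation `μ u_t u_{xy} + ν u_y u_{xt} + η u_x u_{yt} = 0`
(`μ + ν + η = 0`) parametrised by `(α, β, γ, δ)` satisfy the characteristic condition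
`F · adj(g) · Fᵀ = 0` for the principal symbol `g`. -/
theorem veronese_web_characteristic_integrals
    (μ ν η : ℝ) (hμ : μ ≠ 0) (hν : ν ≠ 0) (hη : η ≠ 0) (hμνη : μ + ν + η = 0)
    (p₁ p₂ p₃ : ℝ) (hp : p₁ * p₂ * p₃ ≠ 0) (α β γ δ : ℝ)
    (J₁ J₂ J₃ J₄ J₅ J₆ J₇ J₈ J₉ J₁₀ F₁ F₂ F₃ : ℝ)
    (hJ₁ : J₁ = α ^ 2)
    (hJ₂ : J₂ = β ^ 2 / (4 * ν * η))
    (hJ₃ : J₃ = δ ^ 2 / (4 * η * μ))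
    (hJ₄ : J₄ = γ ^ 2 / (4 * ν * μ))
    (hJ₅ : J₅ = α * β)
    (hJ₆ : J₆ = α * δ)
    (hJ₇ : J₇ = α * γ)
    (hJ₈ : J₈ = -(β * δ) / (2 * η))
    (hJ₉ : J₉ = -(β * γ) / (2 * ν))
    (hJ₁₀ : J₁₀ = -(δ * γ) / (2 * μ))
    (hF₁ : F₁ = J₁ * η * p₂ * p₃ + J₂ * ν * p₂ / p₃ + J₃ * μ * p₃ / p₂
      - J₅ * p₂ + J₆ * p₃ + J₈)
    (hF₂ : F₂ = J₁ * ν * p₁ * p₃ + J₂ * η * p₁ / p₃ + J₄ * μ * p₃ / p₁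
      + J₅ * p₁ - J₇ * p₃ + J₉)
    (hF₃ : F₃ = J₁ * μ * p₁ * p₂ + J₃ * η * p₁ / p₂ + J₄ * ν * p₂ / p₁
      - J₆ * p₁ + J₇ * p₂ + J₁₀)
    (g : Matrix (Fin 3) (Fin 3) ℝ)
    (hg : g = !![0, μ * p₃, ν * p₂; μ * p₃, 0, η * p₁; ν * p₂, η * p₁, 0]) :
    ![F₁, F₂, F₃] ⬝ᵥ (g.adjugate *ᵥ ![F₁, F₂, F₃]) = 0 := by
  have hη' : η = -μ - ν := by linarith
  subst hη' hg hJ₁ hJ₂ hJ₃ hJ₄ hJ₅ hJ₆ hJ₇ hJ₈ hJ₉ hJ₁₀ hF₁ hF₂ hF₃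
  have h1 : p₁ ≠ 0 := fun h => hp (by simp [h])
  have h2 : p₂ ≠ 0 := fun h => hp (by simp [h])
  have h3 : p₃ ≠ 0 := fun h => hp (by simp [h])
  simp only [Matrix.adjugate_fin_three, Matrix.cons_val', Matrix.cons_val_zero,
    Matrix.cons_val_one, Matrix.head_cons, Matrix.empty_val', Matrix.cons_val_fin_one,
    Matrix.head_fin_const, Matrix.cons_val_two, Matrix.tail_cons,
    Matrix.mulVec, dotProduct, Fin.sum_univ_three, Matrix.of_apply]
  field_simp
  ring
end

section
/- Let u : ℝ³ → ℝ be twice continuously differentiable in (x,y,t) satisfying u_{xx} + u_x u_{yt} − u_y u_{xt} = 0 at every point, with u_x nowhere vanishing. Then the following four conservation laws hold at every point: (1) ∂_x(u_y/(2u_x²)) + ∂_y(1/(2u_x)) − ∂_t(u_y²/(2u_x²)) = 0; (2) ∂_x(u_x − u_y u_t) + ∂_y(u_x u_t) = 0; (3) ∂_x(2 u_x u_t − u_y u_t²) + ∂_y(u_t² u_x) − ∂_t(u_x²) = 0; (4) −∂_x(1/u_x) + ∂_t(u_y/u_x) = 0. -/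
lemma lineX (p : ℝ × ℝ × ℝ) :
    HasDerivAt (fun s : ℝ => ((s, p.2.1, p.2.2) : ℝ × ℝ × ℝ)) (1, 0, 0) p.1 :=
  (hasDerivAt_id p.1).prodMk ((hasDerivAt_const p.1 p.2.1).prodMk (hasDerivAt_const p.1 p.2.2))

lemma lineY (p : ℝ × ℝ × ℝ) :
    HasDerivAt (fun s : ℝ => ((p.1, s, p.2.2) : ℝ × ℝ × ℝ)) (0, 1, 0) p.2.1 :=
  (hasDerivAt_const p.2.1 p.1).prodMk ((hasDerivAt_id p.2.1).prodMk (hasDerivAt_const p.2.1 p.2.2))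

lemma lineT (p : ℝ × ℝ × ℝ) :
    HasDerivAt (fun s : ℝ => ((p.1, p.2.1, s) : ℝ × ℝ × ℝ)) (0, 0, 1) p.2.2 :=
  (hasDerivAt_const p.2.2 p.1).prodMk ((hasDerivAt_const p.2.2 p.2.1).prodMk (hasDerivAt_id p.2.2))

lemma sliceX {F : Type*} [NormedAddCommGroup F] [NormedSpace ℝ F]
    (f : ℝ × ℝ × ℝ → F) (p : ℝ × ℝ × ℝ) (hf : DifferentiableAt ℝ f p) :
    HasDerivAt (fun s => f (s, p.2.1, p.2.2)) (fderiv ℝ f p (1, 0, 0)) p.1 :=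
  hf.hasFDerivAt.comp_hasDerivAt p.1 (lineX p)

lemma sliceY {F : Type*} [NormedAddCommGroup F] [NormedSpace ℝ F]
    (f : ℝ × ℝ × ℝ → F) (p : ℝ × ℝ × ℝ) (hf : DifferentiableAt ℝ f p) :
    HasDerivAt (fun s => f (p.1, s, p.2.2)) (fderiv ℝ f p (0, 1, 0)) p.2.1 :=
  hf.hasFDerivAt.comp_hasDerivAt p.2.1 (lineY p)

lemma sliceT {F : Type*} [NormedAddCommGroup F] [NormedSpace ℝ F]
    (f : ℝ × ℝ × ℝ → F) (p : ℝ × ℝ × ℝ) (hf : DifferentiableAt ℝ f p) :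
    HasDerivAt (fun s => f (p.1, p.2.1, s)) (fderiv ℝ f p (0, 0, 1)) p.2.2 :=
  hf.hasFDerivAt.comp_hasDerivAt p.2.2 (lineT p)

set_option maxHeartbeats 1000000 in
/-- The four first-order conservation laws of the equation
`u_{xx} + u_x u_{yt} - u_y u_{xt} = 0`. -/
theorem equation2_conservation_laws
    (u : ℝ × ℝ × ℝ → ℝ) (hu : ContDiff ℝ 2 u)
    (heq : ∀ p : ℝ × ℝ × ℝ,
      pdx (pdx u) p + pdx u p * pdt (pdy u) p - pdy u p * pdt (pdx u) p = 0)
    (hx : ∀ p : ℝ × ℝ × ℝ, pdx u p ≠ 0) :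
    (∀ p : ℝ × ℝ × ℝ,
      pdx (fun q => pdy u q / (2 * (pdx u q) ^ 2)) p
        + pdy (fun q => 1 / (2 * pdx u q)) p
        - pdt (fun q => (pdy u q) ^ 2 / (2 * (pdx u q) ^ 2)) p = 0) ∧
    (∀ p : ℝ × ℝ × ℝ,
      pdx (fun q => pdx u q - pdy u q * pdt u q) p
        + pdy (fun q => pdx u q * pdt u q) p = 0) ∧
    (∀ p : ℝ × ℝ × ℝ,
      pdx (fun q => 2 * pdx u q * pdt u q - pdy u q * (pdt u q) ^ 2) p
        + pdy (fun q => (pdt u q) ^ 2 * pdx u q) p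
        - pdt (fun q => (pdx u q) ^ 2) p = 0) ∧
    (∀ p : ℝ × ℝ × ℝ,
      -pdx (fun q => 1 / pdx u q) p + pdt (fun q => pdy u q / pdx u q) p = 0) := by
  have hd : Differentiable ℝ u := hu.differentiable two_ne_zero
  have hc1 : ContDiff ℝ 1 (fderiv ℝ u) := hu.fderiv_right (by norm_num)
  have hd2 : Differentiable ℝ (fderiv ℝ u) := hc1.differentiable one_ne_zero
  have hsymm : ∀ (p v w : ℝ × ℝ × ℝ),
      fderiv ℝ (fderiv ℝ u) p v w = fderiv ℝ (fderiv ℝ u) p w v := fun p v w =>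
    second_derivative_symmetric (fun q => (hd q).hasFDerivAt) ((hd2 p).hasFDerivAt) v w
  have keyX : ∀ (p : ℝ × ℝ × ℝ) (v : ℝ × ℝ × ℝ),
      HasDerivAt (fun s => fderiv ℝ u (s, p.2.1, p.2.2) v)
        (fderiv ℝ (fderiv ℝ u) p (1, 0, 0) v) p.1 := fun p v => by
    simpa using (sliceX (fderiv ℝ u) p (hd2 p)).clm_apply (hasDerivAt_const p.1 v)
  have keyY : ∀ (p : ℝ × ℝ × ℝ) (v : ℝ × ℝ × ℝ),
      HasDerivAt (fun s => fderiv ℝ u (p.1, s, p.2.2) v)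
        (fderiv ℝ (fderiv ℝ u) p (0, 1, 0) v) p.2.1 := fun p v => by
    simpa using (sliceY (fderiv ℝ u) p (hd2 p)).clm_apply (hasDerivAt_const p.2.1 v)
  have keyT : ∀ (p : ℝ × ℝ × ℝ) (v : ℝ × ℝ × ℝ),
      HasDerivAt (fun s => fderiv ℝ u (p.1, p.2.1, s) v)
        (fderiv ℝ (fderiv ℝ u) p (0, 0, 1) v) p.2.2 := fun p v => by
    simpa using (sliceT (fderiv ℝ u) p (hd2 p)).clm_apply (hasDerivAt_const p.2.2 v)
  have hpdx : pdx u = fun q => fderiv ℝ u q (1, 0, 0) :=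
    funext fun q => (sliceX u q (hd q)).deriv
  have hpdy : pdy u = fun q => fderiv ℝ u q (0, 1, 0) :=
    funext fun q => (sliceY u q (hd q)).deriv
  have hpdt : pdt u = fun q => fderiv ℝ u q (0, 0, 1) :=
    funext fun q => (sliceT u q (hd q)).deriv
  have heq' : ∀ p : ℝ × ℝ × ℝ,
      fderiv ℝ (fderiv ℝ u) p (1, 0, 0) (1, 0, 0)
        + fderiv ℝ u p (1, 0, 0) * fderiv ℝ (fderiv ℝ u) p (0, 0, 1) (0, 1, 0)
        - fderiv ℝ u p (0, 1, 0) * fderiv ℝ (fderiv ℝ u) p (0, 0, 1) (1, 0, 0) = 0 := by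
    intro p
    have h := heq p
    simp only [hpdx, hpdy, hpdt] at h
    rw [show pdx (fun q => fderiv ℝ u q (1, 0, 0)) p
          = fderiv ℝ (fderiv ℝ u) p (1, 0, 0) (1, 0, 0) from (keyX p (1, 0, 0)).deriv,
        show pdt (fun q => fderiv ℝ u q (0, 1, 0)) p
          = fderiv ℝ (fderiv ℝ u) p (0, 0, 1) (0, 1, 0) from (keyT p (0, 1, 0)).deriv,
        show pdt (fun q => fderiv ℝ u q (1, 0, 0)) p
          = fderiv ℝ (fderiv ℝ u) p (0, 0, 1) (1, 0, 0) from (keyT p (1, 0, 0)).deriv] at h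
    exact h
  refine ⟨?_, ?_, ?_, ?_⟩
  · -- law 1
    intro p
    obtain ⟨x, y, t⟩ := p
    have ha : fderiv ℝ u (x, y, t) (1, 0, 0) ≠ 0 := by
      simpa [hpdx] using hx (x, y, t)
    have h0 := heq' (x, y, t)
    have hs12 := hsymm (x, y, t) (1, 0, 0) (0, 1, 0)
    have t1x : HasDerivAt
        (fun s => fderiv ℝ u (s, y, t) (0, 1, 0) / (2 * fderiv ℝ u (s, y, t) (1, 0, 0) ^ 2))
        ((fderiv ℝ (fderiv ℝ u) (x, y, t) (1, 0, 0) (0, 1, 0) * fderiv ℝ u (x, y, t) (1, 0, 0)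
          - 2 * fderiv ℝ u (x, y, t) (0, 1, 0) * fderiv ℝ (fderiv ℝ u) (x, y, t) (1, 0, 0) (1, 0, 0))
          / (2 * fderiv ℝ u (x, y, t) (1, 0, 0) ^ 3)) x := by
      have h := (keyX (x, y, t) (0, 1, 0)).div
        (((keyX (x, y, t) (1, 0, 0)).pow 2).const_mul 2)
        (mul_ne_zero two_ne_zero (pow_ne_zero 2 ha))
      refine HasDerivAt.congr_deriv h (Eq.symm ?_)
      simp only [Pi.pow_apply, Nat.cast_ofNat, Nat.reduceSub, pow_one]
      rw [div_eq_div_iff (mul_ne_zero two_ne_zero (pow_ne_zero 3 ha))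
        (pow_ne_zero 2 (mul_ne_zero two_ne_zero (pow_ne_zero 2 ha)))]
      ring
    have t1y : HasDerivAt
        (fun s => 1 / (2 * fderiv ℝ u (x, s, t) (1, 0, 0)))
        (-(fderiv ℝ (fderiv ℝ u) (x, y, t) (0, 1, 0) (1, 0, 0))
          / (2 * fderiv ℝ u (x, y, t) (1, 0, 0) ^ 2)) y := by
      have h := (hasDerivAt_const y (1 : ℝ)).div
        ((keyY (x, y, t) (1, 0, 0)).const_mul 2)
        (mul_ne_zero two_ne_zero ha)
      refine HasDerivAt.congr_deriv h (Eq.symm ?_)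
      dsimp only
      rw [div_eq_div_iff (mul_ne_zero two_ne_zero (pow_ne_zero 2 ha))
        (pow_ne_zero 2 (mul_ne_zero two_ne_zero ha))]
      ring
    have t1t : HasDerivAt
        (fun s => fderiv ℝ u (x, y, s) (0, 1, 0) ^ 2 / (2 * fderiv ℝ u (x, y, s) (1, 0, 0) ^ 2))
        ((fderiv ℝ u (x, y, t) (0, 1, 0) * fderiv ℝ (fderiv ℝ u) (x, y, t) (0, 0, 1) (0, 1, 0)
            * fderiv ℝ u (x, y, t) (1, 0, 0)
          - fderiv ℝ u (x, y, t) (0, 1, 0) ^ 2 * fderiv ℝ (fderiv ℝ u) (x, y, t) (0, 0, 1) (1, 0, 0))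
          / fderiv ℝ u (x, y, t) (1, 0, 0) ^ 3) t := by
      have h := ((keyT (x, y, t) (0, 1, 0)).pow 2).div
        (((keyT (x, y, t) (1, 0, 0)).pow 2).const_mul 2)
        (mul_ne_zero two_ne_zero (pow_ne_zero 2 ha))
      refine HasDerivAt.congr_deriv h (Eq.symm ?_)
      simp only [Pi.pow_apply, Nat.cast_ofNat, Nat.reduceSub, pow_one]
      rw [div_eq_div_iff (pow_ne_zero 3 ha)
        (pow_ne_zero 2 (mul_ne_zero two_ne_zero (pow_ne_zero 2 ha)))]
      ring
    simp only [hpdx, hpdy, hpdt]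
    simp only [pdx, pdy, pdt]
    rw [t1x.deriv, t1y.deriv, t1t.deriv]
    rw [hs12]
    have hA11 : fderiv ℝ (fderiv ℝ u) (x, y, t) (1, 0, 0) (1, 0, 0)
        = fderiv ℝ u (x, y, t) (0, 1, 0) * fderiv ℝ (fderiv ℝ u) (x, y, t) (0, 0, 1) (1, 0, 0)
          - fderiv ℝ u (x, y, t) (1, 0, 0) * fderiv ℝ (fderiv ℝ u) (x, y, t) (0, 0, 1) (0, 1, 0) := by
      linarith
    rw [hA11]
    rw [div_add_div _ _ (mul_ne_zero two_ne_zero (pow_ne_zero 3 ha))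
      (mul_ne_zero two_ne_zero (pow_ne_zero 2 ha)), div_sub_div _ _
      (mul_ne_zero (mul_ne_zero two_ne_zero (pow_ne_zero 3 ha))
        (mul_ne_zero two_ne_zero (pow_ne_zero 2 ha))) (pow_ne_zero 3 ha),
      div_eq_zero_iff]
    left
    ring
  · -- law 2
    intro p
    obtain ⟨x, y, t⟩ := p
    have h0 := heq' (x, y, t)
    have hs12 := hsymm (x, y, t) (1, 0, 0) (0, 1, 0)
    have hs13 := hsymm (x, y, t) (1, 0, 0) (0, 0, 1)
    have hs23 := hsymm (x, y, t) (0, 1, 0) (0, 0, 1)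
    have t2x : HasDerivAt
        (fun s => fderiv ℝ u (s, y, t) (1, 0, 0)
          - fderiv ℝ u (s, y, t) (0, 1, 0) * fderiv ℝ u (s, y, t) (0, 0, 1))
        (fderiv ℝ (fderiv ℝ u) (x, y, t) (1, 0, 0) (1, 0, 0)
          - (fderiv ℝ (fderiv ℝ u) (x, y, t) (1, 0, 0) (0, 1, 0) * fderiv ℝ u (x, y, t) (0, 0, 1)
            + fderiv ℝ u (x, y, t) (0, 1, 0) * fderiv ℝ (fderiv ℝ u) (x, y, t) (1, 0, 0) (0, 0, 1))) x := by
      have h := (keyX (x, y, t) (1, 0, 0)).sub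
        ((keyX (x, y, t) (0, 1, 0)).mul (keyX (x, y, t) (0, 0, 1)))
      refine HasDerivAt.congr_deriv h (Eq.symm ?_)
      rfl
    have t2y : HasDerivAt
        (fun s => fderiv ℝ u (x, s, t) (1, 0, 0) * fderiv ℝ u (x, s, t) (0, 0, 1))
        (fderiv ℝ (fderiv ℝ u) (x, y, t) (0, 1, 0) (1, 0, 0) * fderiv ℝ u (x, y, t) (0, 0, 1)
          + fderiv ℝ u (x, y, t) (1, 0, 0) * fderiv ℝ (fderiv ℝ u) (x, y, t) (0, 1, 0) (0, 0, 1)) y := by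
      have h := (keyY (x, y, t) (1, 0, 0)).mul (keyY (x, y, t) (0, 0, 1))
      refine HasDerivAt.congr_deriv h (Eq.symm ?_)
      rfl
    simp only [hpdx, hpdy, hpdt]
    simp only [pdx, pdy, pdt]
    rw [t2x.deriv, t2y.deriv, hs12, hs13, hs23]
    linarith
  · -- law 3
    intro p
    obtain ⟨x, y, t⟩ := p
    have h0 := heq' (x, y, t)
    have hs12 := hsymm (x, y, t) (1, 0, 0) (0, 1, 0)
    have hs13 := hsymm (x, y, t) (1, 0, 0) (0, 0, 1)
    have hs23 := hsymm (x, y, t) (0, 1, 0) (0, 0, 1)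
    have t3x : HasDerivAt
        (fun s => 2 * fderiv ℝ u (s, y, t) (1, 0, 0) * fderiv ℝ u (s, y, t) (0, 0, 1)
          - fderiv ℝ u (s, y, t) (0, 1, 0) * fderiv ℝ u (s, y, t) (0, 0, 1) ^ 2)
        (2 * fderiv ℝ (fderiv ℝ u) (x, y, t) (1, 0, 0) (1, 0, 0) * fderiv ℝ u (x, y, t) (0, 0, 1)
          + 2 * fderiv ℝ u (x, y, t) (1, 0, 0) * fderiv ℝ (fderiv ℝ u) (x, y, t) (1, 0, 0) (0, 0, 1)
          - (fderiv ℝ (fderiv ℝ u) (x, y, t) (1, 0, 0) (0, 1, 0) * fderiv ℝ u (x, y, t) (0, 0, 1) ^ 2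
            + 2 * fderiv ℝ u (x, y, t) (0, 1, 0) * fderiv ℝ u (x, y, t) (0, 0, 1)
              * fderiv ℝ (fderiv ℝ u) (x, y, t) (1, 0, 0) (0, 0, 1))) x := by
      have h := (((keyX (x, y, t) (1, 0, 0)).const_mul 2).mul (keyX (x, y, t) (0, 0, 1))).sub
        ((keyX (x, y, t) (0, 1, 0)).mul ((keyX (x, y, t) (0, 0, 1)).pow 2))
      refine HasDerivAt.congr_deriv h (Eq.symm ?_)
      simp only [Pi.pow_apply, Nat.cast_ofNat, Nat.reduceSub, pow_one]
      ring
    have t3y : HasDerivAt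
        (fun s => fderiv ℝ u (x, s, t) (0, 0, 1) ^ 2 * fderiv ℝ u (x, s, t) (1, 0, 0))
        (2 * fderiv ℝ u (x, y, t) (0, 0, 1) * fderiv ℝ (fderiv ℝ u) (x, y, t) (0, 1, 0) (0, 0, 1)
            * fderiv ℝ u (x, y, t) (1, 0, 0)
          + fderiv ℝ u (x, y, t) (0, 0, 1) ^ 2
            * fderiv ℝ (fderiv ℝ u) (x, y, t) (0, 1, 0) (1, 0, 0)) y := by
      have h := ((keyY (x, y, t) (0, 0, 1)).pow 2).mul (keyY (x, y, t) (1, 0, 0))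
      refine HasDerivAt.congr_deriv h (Eq.symm ?_)
      simp only [Pi.pow_apply, Nat.cast_ofNat, Nat.reduceSub, pow_one]
    have t3t : HasDerivAt
        (fun s => fderiv ℝ u (x, y, s) (1, 0, 0) ^ 2)
        (2 * fderiv ℝ u (x, y, t) (1, 0, 0)
          * fderiv ℝ (fderiv ℝ u) (x, y, t) (0, 0, 1) (1, 0, 0)) t := by
      have h := (keyT (x, y, t) (1, 0, 0)).pow 2
      refine HasDerivAt.congr_deriv h (Eq.symm ?_)
      dsimp only
      ring
    simp only [hpdx, hpdy, hpdt]
    simp only [pdx, pdy, pdt]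
    rw [t3x.deriv, t3y.deriv, t3t.deriv, hs12, hs13, hs23]
    linear_combination 2 * fderiv ℝ u (x, y, t) (0, 0, 1) * h0
  · -- law 4
    intro p
    obtain ⟨x, y, t⟩ := p
    have ha : fderiv ℝ u (x, y, t) (1, 0, 0) ≠ 0 := by
      simpa [hpdx] using hx (x, y, t)
    have h0 := heq' (x, y, t)
    have t4x : HasDerivAt
        (fun s => 1 / fderiv ℝ u (s, y, t) (1, 0, 0))
        (-(fderiv ℝ (fderiv ℝ u) (x, y, t) (1, 0, 0) (1, 0, 0))
          / fderiv ℝ u (x, y, t) (1, 0, 0) ^ 2) x := by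
      have h := (hasDerivAt_const x (1 : ℝ)).div (keyX (x, y, t) (1, 0, 0)) ha
      refine HasDerivAt.congr_deriv h (Eq.symm ?_)
      dsimp only
      rw [div_eq_div_iff (pow_ne_zero 2 ha) (pow_ne_zero 2 ha)]
      ring
    have t4t : HasDerivAt
        (fun s => fderiv ℝ u (x, y, s) (0, 1, 0) / fderiv ℝ u (x, y, s) (1, 0, 0))
        ((fderiv ℝ (fderiv ℝ u) (x, y, t) (0, 0, 1) (0, 1, 0) * fderiv ℝ u (x, y, t) (1, 0, 0)
          - fderiv ℝ u (x, y, t) (0, 1, 0) * fderiv ℝ (fderiv ℝ u) (x, y, t) (0, 0, 1) (1, 0, 0))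
          / fderiv ℝ u (x, y, t) (1, 0, 0) ^ 2) t := by
      have h := (keyT (x, y, t) (0, 1, 0)).div (keyT (x, y, t) (1, 0, 0)) ha
      refine HasDerivAt.congr_deriv h (Eq.symm ?_)
      rfl
    simp only [hpdx, hpdy, hpdt]
    simp only [pdx, pdy, pdt]
    rw [t4x.deriv, t4t.deriv]
    have hA11 : fderiv ℝ (fderiv ℝ u) (x, y, t) (1, 0, 0) (1, 0, 0)
        = fderiv ℝ u (x, y, t) (0, 1, 0) * fderiv ℝ (fderiv ℝ u) (x, y, t) (0, 0, 1) (1, 0, 0)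
          - fderiv ℝ u (x, y, t) (1, 0, 0) * fderiv ℝ (fderiv ℝ u) (x, y, t) (0, 0, 1) (0, 1, 0) := by
      linarith
    rw [hA11]
    rw [← neg_div, div_add_div _ _ (pow_ne_zero 2 ha) (pow_ne_zero 2 ha),
      div_eq_zero_iff]
    left
    ring
end

section
/- For all real p₁, p₂, p₃ with p₁ ≠ 0 and all real α, β, γ, δ, set J₁ = α², J₂ = −δβ, J₃ = β²/2, J₄ = αγ, J₅ = δ²/2, J₆ = βγ, J₇ = αβ, J₈ = −αβ − γδ, J₉ = αδ, J₁₀ = −γ²/2, and define F₁ = J₁ p₂/(2p₁²) + J₂ (p₁ − p₂ p₃) + J₃ (2 p₁ p₃ − p₂ p₃²) − J₄/p₁ − J₅ p₂ + J₆ p₃ + J₈, F₂ = J₁/(2p₁) + J₂ p₁ p₃ + J₃ p₃² p₁ + J₅ p₁ − J₇ p₃ + J₉, F₃ = −J₁ p₂²/(2p₁²) − J₃ p₁² + J₄ p₂/p₁ − J₆ p₁ + J₇ p₂ + J₁₀. Let g be the symmetric matrix with g₁₁ = 1, g₂₂ = g₃₃ = g₁₂ = 0, g₁₃ = −p₂/2,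 g₂₃ = p₁/2. Then F · adj(g) · Fᵀ = 0, where adj denotes the adjugate matrix. -/
set_option maxHeartbeats 2000000
open Matrix

/-- The characteristic integrals of the equation `u_{xx} + u_x u_{yt} - u_y u_{xt} = 0`
parametrised by `(α, β, γ, δ)` satisfy the characteristic condition
`F · adj(g) · Fᵀ = 0` for the principal symbol `g`. -/
theorem equation2_characteristic_integrals
    (p₁ p₂ p₃ : ℝ) (hp₁ : p₁ ≠ 0) (α β γ δ : ℝ)
    (J₁ J₂ J₃ J₄ J₅ J₆ J₇ J₈ J₉ J₁₀ F₁ F₂ F₃ : ℝ)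
    (hJ₁ : J₁ = α ^ 2)
    (hJ₂ : J₂ = -(δ * β))
    (hJ₃ : J₃ = β ^ 2 / 2)
    (hJ₄ : J₄ = α * γ)
    (hJ₅ : J₅ = δ ^ 2 / 2)
    (hJ₆ : J₆ = β * γ)
    (hJ₇ : J₇ = α * β)
    (hJ₈ : J₈ = -(α * β) - γ * δ)
    (hJ₉ : J₉ = α * δ)
    (hJ₁₀ : J₁₀ = -(γ ^ 2) / 2)
    (hF₁ : F₁ = J₁ * p₂ / (2 * p₁ ^ 2) + J₂ * (p₁ - p₂ * p₃)
      + J₃ * (2 * p₁ * p₃ - p₂ * p₃ ^ 2) - J₄ / p₁ - J₅ * p₂ + J₆ * p₃ + J₈)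
    (hF₂ : F₂ = J₁ / (2 * p₁) + J₂ * (p₁ * p₃) + J₃ * (p₃ ^ 2 * p₁)
      + J₅ * p₁ - J₇ * p₃ + J₉)
    (hF₃ : F₃ = -(J₁ * p₂ ^ 2 / (2 * p₁ ^ 2)) - J₃ * p₁ ^ 2 + J₄ * p₂ / p₁
      - J₆ * p₁ + J₇ * p₂ + J₁₀)
    (g : Matrix (Fin 3) (Fin 3) ℝ)
    (hg : g = !![1, 0, -p₂ / 2; 0, 0, p₁ / 2; -p₂ / 2, p₁ / 2, 0]) :
    ![F₁, F₂, F₃] ⬝ᵥ (g.adjugate *ᵥ ![F₁, F₂, F₃]) = 0 := by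
  subst hg
  have hadj : (!![1, 0, -p₂ / 2; 0, 0, p₁ / 2; -p₂ / 2, p₁ / 2, 0] :
      Matrix (Fin 3) (Fin 3) ℝ).adjugate =
      !![-(p₁/2)*(p₁/2), -(p₁/2)*(p₂/2), -(p₁/2)*0;
         -(p₂/2)*(p₁/2), -(p₂/2)*(p₂/2), -(p₁/2)*1;
         0, -(p₁/2), 0] := by
    rw [show ((!![1, 0, -p₂ / 2; 0, 0, p₁ / 2; -p₂ / 2, p₁ / 2, 0] :
      Matrix (Fin 3) (Fin 3) ℝ)) = of ![![1, 0, -p₂ / 2], ![0, 0, p₁ / 2], ![-p₂ / 2, p₁ / 2, 0]] from rfl,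
      adjugate_fin_three]
    ext i j
    fin_cases i <;> fin_cases j <;> simp <;> ring
  rw [hadj]
  subst hF₁ hF₂ hF₃ hJ₁ hJ₂ hJ₃ hJ₄ hJ₅ hJ₆ hJ₇ hJ₈ hJ₉ hJ₁₀
  simp [mulVec, dotProduct, Fin.sum_univ_succ]
  field_simp
  ring
end

section
/- Let u : ℝ³ → ℝ be twice continuously differentiable in (x,y,t) satisfying u_{xy} + u_y u_{xt} − u_x u_{yt} = 0 at every point, with u_x and u_y nowhere vanishing. Then the following four conservation laws hold at every point: (1) ∂_x(u_y u_t) + ∂_y(u_x − u_x u_t) = 0; (2) ∂_x(u_y u_t²) + ∂_y(2 u_x u_t − u_x u_t² − u_x) − ∂_t(u_x u_y) = 0; (3) ∂_x(1/u_y) − ∂_t(u_x/u_y) = 0; (4) −∂_y(1/u_x) − ∂_t(u_y/u_x) = 0. -/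
/-- Direction vector for `x`. -/
def vX : ℝ × ℝ × ℝ := (1, 0, 0)
/-- Direction vector for `y`. -/
def vY : ℝ × ℝ × ℝ := (0, 1, 0)
/-- Direction vector for `t`. -/
def vT : ℝ × ℝ × ℝ := (0, 0, 1)

lemma hasDerivAt_slice_x (f : ℝ × ℝ × ℝ → ℝ) (p : ℝ × ℝ × ℝ)
    (hf : DifferentiableAt ℝ f p) :
    HasDerivAt (fun s => f (s, p.2.1, p.2.2)) (fderiv ℝ f p vX) p.1 := by
  have h1 : HasDerivAt (fun s : ℝ => (s, p.2.1, p.2.2)) ((1 : ℝ), (0 : ℝ), (0 : ℝ)) p.1 :=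
    HasDerivAt.prodMk (hasDerivAt_id _) (HasDerivAt.prodMk (hasDerivAt_const _ _) (hasDerivAt_const _ _))
  exact hf.hasFDerivAt.comp_hasDerivAt p.1 h1

lemma hasDerivAt_slice_y (f : ℝ × ℝ × ℝ → ℝ) (p : ℝ × ℝ × ℝ)
    (hf : DifferentiableAt ℝ f p) :
    HasDerivAt (fun s => f (p.1, s, p.2.2)) (fderiv ℝ f p vY) p.2.1 := by
  have h1 : HasDerivAt (fun s : ℝ => (p.1, s, p.2.2)) ((0 : ℝ), (1 : ℝ), (0 : ℝ)) p.2.1 :=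
    HasDerivAt.prodMk (hasDerivAt_const _ _) (HasDerivAt.prodMk (hasDerivAt_id _) (hasDerivAt_const _ _))
  exact hf.hasFDerivAt.comp_hasDerivAt p.2.1 h1

lemma hasDerivAt_slice_t (f : ℝ × ℝ × ℝ → ℝ) (p : ℝ × ℝ × ℝ)
    (hf : DifferentiableAt ℝ f p) :
    HasDerivAt (fun s => f (p.1, p.2.1, s)) (fderiv ℝ f p vT) p.2.2 := by
  have h1 : HasDerivAt (fun s : ℝ => (p.1, p.2.1, s)) ((0 : ℝ), (0 : ℝ), (1 : ℝ)) p.2.2 :=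
    HasDerivAt.prodMk (hasDerivAt_const _ _) (HasDerivAt.prodMk (hasDerivAt_const _ _) (hasDerivAt_id _))
  exact hf.hasFDerivAt.comp_hasDerivAt p.2.2 h1

lemma pdx_eq (f : ℝ × ℝ × ℝ → ℝ) (p : ℝ × ℝ × ℝ) (hf : DifferentiableAt ℝ f p) :
    pdx f p = fderiv ℝ f p vX := (hasDerivAt_slice_x f p hf).deriv

lemma pdy_eq (f : ℝ × ℝ × ℝ → ℝ) (p : ℝ × ℝ × ℝ) (hf : DifferentiableAt ℝ f p) :
    pdy f p = fderiv ℝ f p vY := (hasDerivAt_slice_y f p hf).deriv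

lemma pdt_eq (f : ℝ × ℝ × ℝ → ℝ) (p : ℝ × ℝ × ℝ) (hf : DifferentiableAt ℝ f p) :
    pdt f p = fderiv ℝ f p vT := (hasDerivAt_slice_t f p hf).deriv

/-- The four first-order conservation laws of the equation
`u_{xy} + u_y u_{xt} - u_x u_{yt} = 0`. -/
theorem equation3_conservation_laws
    (u : ℝ × ℝ × ℝ → ℝ) (hu : ContDiff ℝ 2 u)
    (heq : ∀ p : ℝ × ℝ × ℝ,
      pdy (pdx u) p + pdy u p * pdt (pdx u) p - pdx u p * pdt (pdy u) p = 0)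
    (hx : ∀ p : ℝ × ℝ × ℝ, pdx u p ≠ 0)
    (hy : ∀ p : ℝ × ℝ × ℝ, pdy u p ≠ 0) :
    (∀ p : ℝ × ℝ × ℝ,
      pdx (fun q => pdy u q * pdt u q) p
        + pdy (fun q => pdx u q - pdx u q * pdt u q) p = 0) ∧
    (∀ p : ℝ × ℝ × ℝ,
      pdx (fun q => pdy u q * (pdt u q) ^ 2) p
        + pdy (fun q => 2 * pdx u q * pdt u q - pdx u q * (pdt u q) ^ 2 - pdx u q) p
        - pdt (fun q => pdx u q * pdy u q) p = 0) ∧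
    (∀ p : ℝ × ℝ × ℝ,
      pdx (fun q => 1 / pdy u q) p - pdt (fun q => pdx u q / pdy u q) p = 0) ∧
    (∀ p : ℝ × ℝ × ℝ,
      -pdy (fun q => 1 / pdx u q) p - pdt (fun q => pdy u q / pdx u q) p = 0) := by
  have hud : Differentiable ℝ u := hu.differentiable two_ne_zero
  have hF : ContDiff ℝ 1 (fderiv ℝ u) := hu.fderiv_right (by norm_num)
  have hFd : Differentiable ℝ (fderiv ℝ u) := hF.differentiable one_ne_zero
  have hcomp : ∀ v : ℝ × ℝ × ℝ, Differentiable ℝ (fun q => fderiv ℝ u q v) := fun v =>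
    (ContinuousLinearMap.apply ℝ ℝ v).differentiable.comp hFd
  have hDv : ∀ (v w : ℝ × ℝ × ℝ) (p : ℝ × ℝ × ℝ),
      fderiv ℝ (fun q => fderiv ℝ u q v) p w = fderiv ℝ (fderiv ℝ u) p w v := by
    intro v w p
    have h : HasFDerivAt (fun q => fderiv ℝ u q v)
        ((ContinuousLinearMap.apply ℝ ℝ v).comp (fderiv ℝ (fderiv ℝ u) p)) p :=
      (ContinuousLinearMap.apply ℝ ℝ v).hasFDerivAt.comp p (hFd p).hasFDerivAt
    rw [h.fderiv]; rfl
  have hsymm : ∀ (p v w : ℝ × ℝ × ℝ),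
      fderiv ℝ (fderiv ℝ u) p v w = fderiv ℝ (fderiv ℝ u) p w v := fun p v w =>
    second_derivative_symmetric (fun y => (hud y).hasFDerivAt) ((hFd p).hasFDerivAt) v w
  have hpx : pdx u = fun q => fderiv ℝ u q vX := funext fun q => pdx_eq u q (hud q)
  have hpy : pdy u = fun q => fderiv ℝ u q vY := funext fun q => pdy_eq u q (hud q)
  have hpt : pdt u = fun q => fderiv ℝ u q vT := funext fun q => pdt_eq u q (hud q)
  -- refined slice derivatives for first-order partials
  have slice_x : ∀ (v : ℝ × ℝ × ℝ) (p : ℝ × ℝ × ℝ),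
      HasDerivAt (fun s => fderiv ℝ u (s, p.2.1, p.2.2) v)
        (fderiv ℝ (fderiv ℝ u) p vX v) p.1 := by
    intro v p
    have h := hasDerivAt_slice_x (fun q => fderiv ℝ u q v) p (hcomp v p)
    rwa [hDv] at h
  have slice_y : ∀ (v : ℝ × ℝ × ℝ) (p : ℝ × ℝ × ℝ),
      HasDerivAt (fun s => fderiv ℝ u (p.1, s, p.2.2) v)
        (fderiv ℝ (fderiv ℝ u) p vY v) p.2.1 := by
    intro v p
    have h := hasDerivAt_slice_y (fun q => fderiv ℝ u q v) p (hcomp v p)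
    rwa [hDv] at h
  have slice_t : ∀ (v : ℝ × ℝ × ℝ) (p : ℝ × ℝ × ℝ),
      HasDerivAt (fun s => fderiv ℝ u (p.1, p.2.1, s) v)
        (fderiv ℝ (fderiv ℝ u) p vT v) p.2.2 := by
    intro v p
    have h := hasDerivAt_slice_t (fun q => fderiv ℝ u q v) p (hcomp v p)
    rwa [hDv] at h
  -- the PDE in terms of second fderiv
  have key : ∀ p : ℝ × ℝ × ℝ,
      fderiv ℝ (fderiv ℝ u) p vX vY + fderiv ℝ u p vY * fderiv ℝ (fderiv ℝ u) p vX vT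
        - fderiv ℝ u p vX * fderiv ℝ (fderiv ℝ u) p vY vT = 0 := by
    intro p
    have h := heq p
    rw [hpx, hpy] at h
    have e1 : pdy (fun q => fderiv ℝ u q vX) p = fderiv ℝ (fderiv ℝ u) p vY vX := by
      rw [pdy_eq _ _ (hcomp vX p), hDv]
    have e2 : pdt (fun q => fderiv ℝ u q vX) p = fderiv ℝ (fderiv ℝ u) p vT vX := by
      rw [pdt_eq _ _ (hcomp vX p), hDv]
    have e3 : pdt (fun q => fderiv ℝ u q vY) p = fderiv ℝ (fderiv ℝ u) p vT vY := by
      rw [pdt_eq _ _ (hcomp vY p), hDv]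
    rw [e1, e2, e3, hsymm p vY vX, hsymm p vT vX, hsymm p vT vY] at h
    exact h
  refine ⟨?_, ?_, ?_, ?_⟩
  · intro p
    simp only [hpx, hpy, hpt]
    have e1 : pdx (fun q => fderiv ℝ u q vY * fderiv ℝ u q vT) p
        = fderiv ℝ (fderiv ℝ u) p vX vY * fderiv ℝ u p vT
          + fderiv ℝ u p vY * fderiv ℝ (fderiv ℝ u) p vX vT :=
      ((slice_x vY p).mul (slice_x vT p)).deriv
    have e2 : pdy (fun q => fderiv ℝ u q vX - fderiv ℝ u q vX * fderiv ℝ u q vT) p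
        = fderiv ℝ (fderiv ℝ u) p vY vX
          - (fderiv ℝ (fderiv ℝ u) p vY vX * fderiv ℝ u p vT
             + fderiv ℝ u p vX * fderiv ℝ (fderiv ℝ u) p vY vT) :=
      ((slice_y vX p).sub ((slice_y vX p).mul (slice_y vT p))).deriv
    rw [e1, e2, hsymm p vY vX]
    linear_combination key p
  · intro p
    simp only [hpx, hpy, hpt, pow_two]
    have e1 : pdx (fun q => fderiv ℝ u q vY * (fderiv ℝ u q vT * fderiv ℝ u q vT)) p
        = fderiv ℝ (fderiv ℝ u) p vX vY * (fderiv ℝ u p vT * fderiv ℝ u p vT)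
          + fderiv ℝ u p vY * (fderiv ℝ (fderiv ℝ u) p vX vT * fderiv ℝ u p vT
             + fderiv ℝ u p vT * fderiv ℝ (fderiv ℝ u) p vX vT) :=
      ((slice_x vY p).mul ((slice_x vT p).mul (slice_x vT p))).deriv
    have e2 : pdy (fun q => 2 * fderiv ℝ u q vX * fderiv ℝ u q vT
          - fderiv ℝ u q vX * (fderiv ℝ u q vT * fderiv ℝ u q vT) - fderiv ℝ u q vX) p
        = (2 * fderiv ℝ (fderiv ℝ u) p vY vX * fderiv ℝ u p vT
            + 2 * fderiv ℝ u p vX * fderiv ℝ (fderiv ℝ u) p vY vT)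
          - (fderiv ℝ (fderiv ℝ u) p vY vX * (fderiv ℝ u p vT * fderiv ℝ u p vT)
             + fderiv ℝ u p vX * (fderiv ℝ (fderiv ℝ u) p vY vT * fderiv ℝ u p vT
                + fderiv ℝ u p vT * fderiv ℝ (fderiv ℝ u) p vY vT))
          - fderiv ℝ (fderiv ℝ u) p vY vX := by
      have h2 : HasDerivAt (fun s => 2 * fderiv ℝ u (p.1, s, p.2.2) vX)
          (2 * fderiv ℝ (fderiv ℝ u) p vY vX) p.2.1 := by
        simpa [mul_comm] using (slice_y vX p).const_mul (2 : ℝ)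
      exact (((h2.mul (slice_y vT p)).sub
        ((slice_y vX p).mul ((slice_y vT p).mul (slice_y vT p)))).sub (slice_y vX p)).deriv
    have e3 : pdt (fun q => fderiv ℝ u q vX * fderiv ℝ u q vY) p
        = fderiv ℝ (fderiv ℝ u) p vT vX * fderiv ℝ u p vY
          + fderiv ℝ u p vX * fderiv ℝ (fderiv ℝ u) p vT vY :=
      ((slice_t vX p).mul (slice_t vY p)).deriv
    rw [e1, e2, e3, hsymm p vY vX, hsymm p vT vX, hsymm p vT vY]
    linear_combination (2 * fderiv ℝ u p vT - 1) * key p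
  · intro p
    simp only [hpx, hpy]
    have hb0 : fderiv ℝ u p vY ≠ 0 := by
      rw [← pdy_eq u p (hud p)]; exact hy p
    have e1 : pdx (fun q => 1 / fderiv ℝ u q vY) p
        = (0 * fderiv ℝ u p vY - 1 * fderiv ℝ (fderiv ℝ u) p vX vY)
          / fderiv ℝ u p vY ^ 2 :=
      ((hasDerivAt_const p.1 (1 : ℝ)).div (slice_x vY p) hb0).deriv
    have e2 : pdt (fun q => fderiv ℝ u q vX / fderiv ℝ u q vY) p
        = (fderiv ℝ (fderiv ℝ u) p vT vX * fderiv ℝ u p vY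
            - fderiv ℝ u p vX * fderiv ℝ (fderiv ℝ u) p vT vY)
          / fderiv ℝ u p vY ^ 2 :=
      ((slice_t vX p).div (slice_t vY p) hb0).deriv
    rw [e1, e2, hsymm p vT vX, hsymm p vT vY]
    rw [div_sub_div_same, div_eq_zero_iff]
    left
    linear_combination -key p
  · intro p
    simp only [hpx, hpy]
    have ha0 : fderiv ℝ u p vX ≠ 0 := by
      rw [← pdx_eq u p (hud p)]; exact hx p
    have e1 : pdy (fun q => 1 / fderiv ℝ u q vX) p
        = (0 * fderiv ℝ u p vX - 1 * fderiv ℝ (fderiv ℝ u) p vY vX)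
          / fderiv ℝ u p vX ^ 2 :=
      ((hasDerivAt_const p.2.1 (1 : ℝ)).div (slice_y vX p) ha0).deriv
    have e2 : pdt (fun q => fderiv ℝ u q vY / fderiv ℝ u q vX) p
        = (fderiv ℝ (fderiv ℝ u) p vT vY * fderiv ℝ u p vX
            - fderiv ℝ u p vY * fderiv ℝ (fderiv ℝ u) p vT vX)
          / fderiv ℝ u p vX ^ 2 :=
      ((slice_t vY p).div (slice_t vX p) ha0).deriv
    rw [e1, e2, hsymm p vY vX, hsymm p vT vX, hsymm p vT vY]
    rw [← neg_div, ← sub_div, div_eq_zero_iff]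
    left
    linear_combination key p
end

section
/- For all real p₁, p₂, p₃ with p₁ ≠ 0 and p₂ ≠ 0 and all real α, β, γ, δ, set J₁ = αβ, J₂ = α², J₃ = δ²/4, J₄ = γ²/4, J₅ = −β²/4, J₆ = −αδ, J₇ = αγ, J₈ = −βδ/2, J₉ = αγ − βγ/2, J₁₀ = −δγ/2, and define F₁ = J₁ p₂ p₃ + J₂ p₂ p₃² + J₃/p₂ − J₅ p₂ + J₆ p₃ + J₈, F₂ = J₁ (p₁ − p₁ p₃) + J₂ (2 p₁ p₃ − p₁ p₃² − p₁) − J₄/p₁ + J₅ p₁ − J₇ p₃ + J₉, F₃ = −J₂ p₁ p₂ − J₃ p₁/p₂ − J₄ p₂/p₁ − J₆ p₁ + J₇ p₂ + J₁₀. Let g be the symmetric matrix with g₁₁ = g₂₂ = g₃₃ = 0, g₁₂ = 1/2, g₁₃ = p₂/2, g₂₃ = −p₁/2. Then F · adj(g) · Fᵀ = 0, where adj denotes the adjugate matrix. -/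
open Matrix

/-- The characteristic integrals of the equation `u_{xy} + u_y u_{xt} - u_x u_{yt} = 0`
parametrised by `(α, β, γ, δ)` satisfy the characteristic condition
`F · adj(g) · Fᵀ = 0` for the principal symbol `g`. -/
theorem equation3_characteristic_integrals
    (p₁ p₂ p₃ : ℝ) (hp₁ : p₁ ≠ 0) (hp₂ : p₂ ≠ 0) (α β γ δ : ℝ)
    (J₁ J₂ J₃ J₄ J₅ J₆ J₇ J₈ J₉ J₁₀ F₁ F₂ F₃ : ℝ)
    (hJ₁ : J₁ = α * β)
    (hJ₂ : J₂ = α ^ 2)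
    (hJ₃ : J₃ = δ ^ 2 / 4)
    (hJ₄ : J₄ = γ ^ 2 / 4)
    (hJ₅ : J₅ = -(β ^ 2) / 4)
    (hJ₆ : J₆ = -(α * δ))
    (hJ₇ : J₇ = α * γ)
    (hJ₈ : J₈ = -(β * δ) / 2)
    (hJ₉ : J₉ = α * γ - β * γ / 2)
    (hJ₁₀ : J₁₀ = -(δ * γ) / 2)
    (hF₁ : F₁ = J₁ * (p₂ * p₃) + J₂ * (p₂ * p₃ ^ 2) + J₃ / p₂
      - J₅ * p₂ + J₆ * p₃ + J₈)
    (hF₂ : F₂ = J₁ * (p₁ - p₁ * p₃) + J₂ * (2 * p₁ * p₃ - p₁ * p₃ ^ 2 - p₁)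
      - J₄ / p₁ + J₅ * p₁ - J₇ * p₃ + J₉)
    (hF₃ : F₃ = -(J₂ * p₁ * p₂) - J₃ * p₁ / p₂ - J₄ * p₂ / p₁
      - J₆ * p₁ + J₇ * p₂ + J₁₀)
    (g : Matrix (Fin 3) (Fin 3) ℝ)
    (hg : g = !![0, 1 / 2, p₂ / 2; 1 / 2, 0, -p₁ / 2; p₂ / 2, -p₁ / 2, 0]) :
    ![F₁, F₂, F₃] ⬝ᵥ (g.adjugate *ᵥ ![F₁, F₂, F₃]) = 0 := by
  subst hg hF₁ hF₂ hF₃ hJ₁ hJ₂ hJ₃ hJ₄ hJ₅ hJ₆ hJ₇ hJ₈ hJ₉ hJ₁₀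
  rw [Matrix.adjugate_fin_three]
  simp [Matrix.mulVec, dotProduct, Fin.sum_univ_three]
  field_simp
  ring
end

section
/- For all real p₁, p₂, p₃ and all real α, β, γ, δ, set J₁ = −αδ − βγ/2, J₂ = 2αγ + δ²/2, J₃ = δγ/2, J₄ = γ²/4, J₅ = αγ, J₆ = −αδ, J₇ = α² + βδ/2, J₈ = α², J₉ = αβ, J₁₀ = −β²/4, and define F₁ = J₂ p₃²/2 + J₃ (p₂ p₃ − p₃³) + J₄ (p₂² − 2 p₂ p₃² + p₃⁴) − J₅ p₂ + J₆ p₃ + J₈, F₂ = J₁ (p₂ − p₃²) + J₂ (p₂ p₃ − p₃³/2) + J₃ (−p₁ p₃ + p₂² − 3 p₂ p₃² + p₃⁴) + J₄ (−2 p₁ p₂ + 2 p₁ p₃² − 3 p₂² p₃ + 4 p₂ p₃³ − p₃⁵) + J₅ p₁ − J₇ p₃ + J₉, F₃ = J₁ (p₁ + p₂ p₃) + J₂ (−p₂ p₃² − p₂²/2 + (3/2) p₃² p₂) + J₃ (p₁ p₂ + 2 p₃ p₂² − p₂ p₃³) + J₄ (−2 p₁ p₂ p₃ − p₁² − 3 p₂²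 p₃² + p₂ p₃⁴ + p₂³) − J₆ p₁ + J₇ p₂ + J₁₀. Let g be the symmetric matrix with g₁₁ = 0, g₁₂ = 0, g₁₃ = 1/2, g₂₂ = 1, g₂₃ = −p₃/2, g₃₃ = p₂. Then F · adj(g) · Fᵀ = 0, where adj denotes the adjugate matrix. -/
set_option maxHeartbeats 2000000


open Matrix

/-- The characteristic integrals of the equation `u_{yy} + u_{xt} + u_y u_{tt} - u_t u_{yt} = 0`
parametrised by `(α, β, γ, δ)` satisfy the characteristic condition
`F · adj(g) · Fᵀ = 0` for the principal symbol `g`. -/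
theorem equation4_characteristic_integrals
    (p₁ p₂ p₃ : ℝ) (α β γ δ : ℝ)
    (J₁ J₂ J₃ J₄ J₅ J₆ J₇ J₈ J₉ J₁₀ F₁ F₂ F₃ : ℝ)
    (hJ₁ : J₁ = -(α * δ) - β * γ / 2)
    (hJ₂ : J₂ = 2 * α * γ + δ ^ 2 / 2)
    (hJ₃ : J₃ = δ * γ / 2)
    (hJ₄ : J₄ = γ ^ 2 / 4)
    (hJ₅ : J₅ = α * γ)
    (hJ₆ : J₆ = -(α * δ))
    (hJ₇ : J₇ = α ^ 2 + β * δ / 2)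
    (hJ₈ : J₈ = α ^ 2)
    (hJ₉ : J₉ = α * β)
    (hJ₁₀ : J₁₀ = -(β ^ 2) / 4)
    (hF₁ : F₁ = J₂ * (p₃ ^ 2 / 2) + J₃ * (p₂ * p₃ - p₃ ^ 3)
      + J₄ * (p₂ ^ 2 - 2 * p₂ * p₃ ^ 2 + p₃ ^ 4) - J₅ * p₂ + J₆ * p₃ + J₈)
    (hF₂ : F₂ = J₁ * (p₂ - p₃ ^ 2) + J₂ * (p₂ * p₃ - p₃ ^ 3 / 2)
      + J₃ * (-(p₁ * p₃) + p₂ ^ 2 - 3 * p₂ * p₃ ^ 2 + p₃ ^ 4)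
      + J₄ * (-(2 * p₁ * p₂) + 2 * p₁ * p₃ ^ 2 - 3 * p₂ ^ 2 * p₃
          + 4 * p₂ * p₃ ^ 3 - p₃ ^ 5)
      + J₅ * p₁ - J₇ * p₃ + J₉)
    (hF₃ : F₃ = J₁ * (p₁ + p₂ * p₃)
      + J₂ * (-(p₂ * p₃ ^ 2) - p₂ ^ 2 / 2 + 3 / 2 * p₃ ^ 2 * p₂)
      + J₃ * (p₁ * p₂ + 2 * p₃ * p₂ ^ 2 - p₂ * p₃ ^ 3)
      + J₄ * (-(2 * p₁ * p₂ * p₃) - p₁ ^ 2 - 3 * p₂ ^ 2 * p₃ ^ 2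
          + p₂ * p₃ ^ 4 + p₂ ^ 3)
      - J₆ * p₁ + J₇ * p₂ + J₁₀)
    (g : Matrix (Fin 3) (Fin 3) ℝ)
    (hg : g = !![0, 0, 1 / 2; 0, 1, -p₃ / 2; 1 / 2, -p₃ / 2, p₂]) :
    ![F₁, F₂, F₃] ⬝ᵥ (g.adjugate *ᵥ ![F₁, F₂, F₃]) = 0 := by
  subst hg hF₁ hF₂ hF₃ hJ₁ hJ₂ hJ₃ hJ₄ hJ₅ hJ₆ hJ₇ hJ₈ hJ₉ hJ₁₀
  simp only [Matrix.adjugate_fin_three_of, Matrix.mulVec, dotProduct,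
    Fin.sum_univ_three, Matrix.of_apply, Matrix.cons_val', Matrix.cons_val_zero,
    Matrix.cons_val_one, Matrix.head_cons, Matrix.cons_val_two, Matrix.tail_cons,
    Matrix.empty_val', Matrix.cons_val_fin_one, Matrix.head_fin_const]
  ring
end

section
/- For all real p₁, p₂, p₃ with p₁ ≠ 0 and all real α, β, γ, δ, set J₁ = α², J₂ = −βγ/2 − δ²/4, J₃ = −β²/4, J₄ = −βδ/2, J₅ = −γδ/2, J₆ = −βγ/2, J₇ = βα, J₈ = γ²/4, J₉ = γα, J₁₀ = δα, and define F₁ = −J₂ p₂² + J₃ (−p₃² + 2 p₃ p₂² − p₂⁴) + J₄ (p₃ p₂ − p₂³) − J₅ p₂ + J₆ p₃ + J₈, F₂ = J₁ p₂/p₁ + J₂ p₁ p₂ + J₃ (−2 p₁ p₂ p₃ + p₁ p₂³) + J₄ (−p₁ p₃ + p₁ p₂²) + J₅ p₁ − J₇ p₃ + J₉, F₃ = −J₁/p₁ + J₂ p₁ + J₃ p₁ p₂² + J₄ p₁ p₂ − J₆ p₁ + J₇ p₂ + J₁₀. Let g be the symmetric matrix with g₁₁ = g₃₃ = 0, g₁₂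 = −p₂/2, g₁₃ = 1/2, g₂₂ = p₁, g₂₃ = 0. Then F · adj(g) · Fᵀ = 0, where adj denotes the adjugate matrix. -/
open Matrix
set_option maxHeartbeats 2000000 in

/-- The characteristic integrals of the equation `u_{xt} + u_x u_{yy} - u_y u_{xy} = 0`
parametrised by `(α, β, γ, δ)` satisfy the characteristic condition
`F · adj(g) · Fᵀ = 0` for the principal symbol `g`. -/
theorem equation5_characteristic_integrals
    (p₁ p₂ p₃ : ℝ) (hp₁ : p₁ ≠ 0) (α β γ δ : ℝ)
    (J₁ J₂ J₃ J₄ J₅ J₆ J₇ J₈ J₉ J₁₀ F₁ F₂ F₃ : ℝ)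
    (hJ₁ : J₁ = α ^ 2)
    (hJ₂ : J₂ = -(β * γ) / 2 - δ ^ 2 / 4)
    (hJ₃ : J₃ = -(β ^ 2) / 4)
    (hJ₄ : J₄ = -(β * δ) / 2)
    (hJ₅ : J₅ = -(γ * δ) / 2)
    (hJ₆ : J₆ = -(β * γ) / 2)
    (hJ₇ : J₇ = β * α)
    (hJ₈ : J₈ = γ ^ 2 / 4)
    (hJ₉ : J₉ = γ * α)
    (hJ₁₀ : J₁₀ = δ * α)
    (hF₁ : F₁ = -(J₂ * p₂ ^ 2) + J₃ * (-(p₃ ^ 2) + 2 * p₃ * p₂ ^ 2 - p₂ ^ 4)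
      + J₄ * (p₃ * p₂ - p₂ ^ 3) - J₅ * p₂ + J₆ * p₃ + J₈)
    (hF₂ : F₂ = J₁ * p₂ / p₁ + J₂ * (p₁ * p₂)
      + J₃ * (-(2 * p₁ * p₂ * p₃) + p₁ * p₂ ^ 3)
      + J₄ * (-(p₁ * p₃) + p₁ * p₂ ^ 2) + J₅ * p₁ - J₇ * p₃ + J₉)
    (hF₃ : F₃ = -(J₁ / p₁) + J₂ * p₁ + J₃ * (p₁ * p₂ ^ 2) + J₄ * (p₁ * p₂)
      - J₆ * p₁ + J₇ * p₂ + J₁₀)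
    (g : Matrix (Fin 3) (Fin 3) ℝ)
    (hg : g = !![0, -p₂ / 2, 1 / 2; -p₂ / 2, p₁, 0; 1 / 2, 0, 0]) :
    ![F₁, F₂, F₃] ⬝ᵥ (g.adjugate *ᵥ ![F₁, F₂, F₃]) = 0 := by
  subst hJ₁ hJ₂ hJ₃ hJ₄ hJ₅ hJ₆ hJ₇ hJ₈ hJ₉ hJ₁₀ hF₁ hF₂ hF₃ hg
  rw [Matrix.adjugate_fin_three]
  simp [Matrix.mulVec, dotProduct, Fin.sum_univ_three, Matrix.vecHead, Matrix.vecTail]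
  field_simp
  ring
end

section
/- Let u : ℝ³ → ℝ be twice continuously differentiable in (x,y,t) satisfying u_t u_{xy} + u_y u_{xt} + u_x u_{yt} = 0 at every point. Then the following three conservation laws hold at every point: (1) ∂_y(u_x² u_t) + ∂_t(u_x² u_y) = 0; (2) ∂_x(u_y² u_t) + ∂_t(u_y² u_x) = 0; (3) ∂_x(u_t² u_y) + ∂_y(u_t² u_x) = 0. Moreover, each of these three conservation laws is characteristic: writing F⁽¹⁾ = (0, p₁² p₃, p₁² p₂), F⁽²⁾ = (p₂² p₃, 0, p₂² p₁), F⁽³⁾ = (p₃² p₂, p₃² p₁, 0) and letting g be the symmetric matrix with zero diagonal and entries g₁₂ = p₃/2, g₁₃ = p₂/2, g₂₃ = p₁/2, one has F⁽ⁱ⁾ · adj(g) · (F⁽ⁱ⁾)ᵀ = 0 for i = 1, 2, 3 and all real p₁, p₂, p₃, where adj denotes the adjugate matrix. -/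
open Matrix

private lemma lineX_s16 (a b s : ℝ) :
    HasDerivAt (fun s : ℝ => ((s, a, b) : ℝ × ℝ × ℝ)) ((1, 0, 0) : ℝ × ℝ × ℝ) s :=
  (hasDerivAt_id s).prodMk ((hasDerivAt_const s a).prodMk (hasDerivAt_const s b))

private lemma lineY_s16 (a b s : ℝ) :
    HasDerivAt (fun s : ℝ => ((a, s, b) : ℝ × ℝ × ℝ)) ((0, 1, 0) : ℝ × ℝ × ℝ) s :=
  (hasDerivAt_const s a).prodMk ((hasDerivAt_id s).prodMk (hasDerivAt_const s b))

private lemma lineT_s16 (a b s : ℝ) :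
    HasDerivAt (fun s : ℝ => ((a, b, s) : ℝ × ℝ × ℝ)) ((0, 0, 1) : ℝ × ℝ × ℝ) s :=
  (hasDerivAt_const s a).prodMk ((hasDerivAt_const s b).prodMk (hasDerivAt_id s))

private lemma dir_deriv {E : Type*} [NormedAddCommGroup E] [NormedSpace ℝ E]
    {f : ℝ × ℝ × ℝ → E} {ℓ : ℝ → ℝ × ℝ × ℝ} {v : ℝ × ℝ × ℝ} {s : ℝ}
    (hf : DifferentiableAt ℝ f (ℓ s)) (hℓ : HasDerivAt ℓ v s) :
    HasDerivAt (fun t => f (ℓ t)) (fderiv ℝ f (ℓ s) v) s :=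
  hf.hasFDerivAt.comp_hasDerivAt s hℓ

/-- The equation `u_t u_{xy} + u_y u_{xt} + u_x u_{yt} = 0` possesses exactly three
characteristic conservation laws. -/
theorem linearly_nondegenerate_equation_three_characteristic_integrals
    (u : ℝ × ℝ × ℝ → ℝ) (hu : ContDiff ℝ 2 u)
    (heq : ∀ p : ℝ × ℝ × ℝ,
      pdt u p * pdy (pdx u) p + pdy u p * pdt (pdx u) p
        + pdx u p * pdt (pdy u) p = 0) :
    ((∀ p : ℝ × ℝ × ℝ,
        pdy (fun q => (pdx u q) ^ 2 * pdt u q) p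
          + pdt (fun q => (pdx u q) ^ 2 * pdy u q) p = 0) ∧
     (∀ p : ℝ × ℝ × ℝ,
        pdx (fun q => (pdy u q) ^ 2 * pdt u q) p
          + pdt (fun q => (pdy u q) ^ 2 * pdx u q) p = 0) ∧
     (∀ p : ℝ × ℝ × ℝ,
        pdx (fun q => (pdt u q) ^ 2 * pdy u q) p
          + pdy (fun q => (pdt u q) ^ 2 * pdx u q) p = 0)) ∧
    (∀ p₁ p₂ p₃ : ℝ,
      (![(0 : ℝ), p₁ ^ 2 * p₃, p₁ ^ 2 * p₂] ⬝ᵥ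
        ((!![0, p₃ / 2, p₂ / 2; p₃ / 2, 0, p₁ / 2; p₂ / 2, p₁ / 2,
            (0 : ℝ)]).adjugate *ᵥ ![(0 : ℝ), p₁ ^ 2 * p₃, p₁ ^ 2 * p₂]) = 0) ∧
      (![p₂ ^ 2 * p₃, (0 : ℝ), p₂ ^ 2 * p₁] ⬝ᵥ
        ((!![0, p₃ / 2, p₂ / 2; p₃ / 2, 0, p₁ / 2; p₂ / 2, p₁ / 2,
            (0 : ℝ)]).adjugate *ᵥ ![p₂ ^ 2 * p₃, (0 : ℝ), p₂ ^ 2 * p₁]) = 0) ∧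
      (![p₃ ^ 2 * p₂, p₃ ^ 2 * p₁, (0 : ℝ)] ⬝ᵥ
        ((!![0, p₃ / 2, p₂ / 2; p₃ / 2, 0, p₁ / 2; p₂ / 2, p₁ / 2,
            (0 : ℝ)]).adjugate *ᵥ ![p₃ ^ 2 * p₂, p₃ ^ 2 * p₁, (0 : ℝ)]) = 0)) := by
  set e₁ : ℝ × ℝ × ℝ := (1, 0, 0) with he₁
  set e₂ : ℝ × ℝ × ℝ := (0, 1, 0) with he₂
  set e₃ : ℝ × ℝ × ℝ := (0, 0, 1) with he₃
  set F : (ℝ × ℝ × ℝ) → (ℝ × ℝ × ℝ) →L[ℝ] ℝ := fderiv ℝ u with hF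
  set M : (ℝ × ℝ × ℝ) → (ℝ × ℝ × ℝ) →L[ℝ] (ℝ × ℝ × ℝ) →L[ℝ] ℝ := fderiv ℝ F with hM
  have hud : ∀ q, DifferentiableAt ℝ u q := fun q =>
    (hu.differentiable (by norm_num)).differentiableAt
  have hF1 : ContDiff ℝ 1 F := hu.fderiv_right (by norm_num)
  have hFd : ∀ q, DifferentiableAt ℝ F q := fun q =>
    (hF1.differentiable (by norm_num)).differentiableAt
  -- line derivatives of F
  have hFx : ∀ p : ℝ × ℝ × ℝ, HasDerivAt (fun s => F (s, p.2.1, p.2.2)) (M p e₁) p.1 :=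
    fun p => dir_deriv (hFd _) (lineX_s16 p.2.1 p.2.2 p.1)
  have hFy : ∀ p : ℝ × ℝ × ℝ, HasDerivAt (fun s => F (p.1, s, p.2.2)) (M p e₂) p.2.1 :=
    fun p => dir_deriv (hFd _) (lineY_s16 p.1 p.2.2 p.2.1)
  have hFt : ∀ p : ℝ × ℝ × ℝ, HasDerivAt (fun s => F (p.1, p.2.1, s)) (M p e₃) p.2.2 :=
    fun p => dir_deriv (hFd _) (lineT_s16 p.1 p.2.1 p.2.2)
  have hFxv : ∀ (p : ℝ × ℝ × ℝ) (v : ℝ × ℝ × ℝ),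
      HasDerivAt (fun s => F (s, p.2.1, p.2.2) v) (M p e₁ v) p.1 := fun p v => by
    simpa using (hFx p).clm_apply (hasDerivAt_const _ v)
  have hFyv : ∀ (p : ℝ × ℝ × ℝ) (v : ℝ × ℝ × ℝ),
      HasDerivAt (fun s => F (p.1, s, p.2.2) v) (M p e₂ v) p.2.1 := fun p v => by
    simpa using (hFy p).clm_apply (hasDerivAt_const _ v)
  have hFtv : ∀ (p : ℝ × ℝ × ℝ) (v : ℝ × ℝ × ℝ),
      HasDerivAt (fun s => F (p.1, p.2.1, s) v) (M p e₃ v) p.2.2 := fun p v => by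
    simpa using (hFt p).clm_apply (hasDerivAt_const _ v)
  -- first partials
  have hpdx : pdx u = fun q => F q e₁ := funext fun q =>
    (dir_deriv (hud _) (lineX_s16 q.2.1 q.2.2 q.1)).deriv
  have hpdy : pdy u = fun q => F q e₂ := funext fun q =>
    (dir_deriv (hud _) (lineY_s16 q.1 q.2.2 q.2.1)).deriv
  have hpdt : pdt u = fun q => F q e₃ := funext fun q =>
    (dir_deriv (hud _) (lineT_s16 q.1 q.2.1 q.2.2)).deriv
  -- symmetry of second derivative
  have hsym : ∀ (q : ℝ × ℝ × ℝ) (v w : ℝ × ℝ × ℝ), M q v w = M q w v := fun q =>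
    hu.contDiffAt.isSymmSndFDerivAt (by norm_num)
  -- the equation in terms of F and M
  have h : ∀ p : ℝ × ℝ × ℝ,
      F p e₃ * M p e₂ e₁ + F p e₂ * M p e₃ e₁ + F p e₁ * M p e₃ e₂ = 0 := by
    intro p
    have h0 := heq p
    rw [hpdx, hpdy, hpdt] at h0
    have h1 : pdy (fun q => F q e₁) p = M p e₂ e₁ := (hFyv p e₁).deriv
    have h2 : pdt (fun q => F q e₁) p = M p e₃ e₁ := (hFtv p e₁).deriv
    have h3 : pdt (fun q => F q e₂) p = M p e₃ e₂ := (hFtv p e₂).deriv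
    rw [h1, h2, h3] at h0
    exact h0
  constructor
  · refine ⟨fun p => ?_, fun p => ?_, fun p => ?_⟩
    · rw [hpdx, hpdy, hpdt]
      have d1 : pdy (fun q => (F q e₁) ^ 2 * F q e₃) p
          = ((2 : ℕ) : ℝ) * F p e₁ ^ (2 - 1) * M p e₂ e₁ * F p e₃
            + F p e₁ ^ 2 * M p e₂ e₃ :=
        (((hFyv p e₁).pow 2).mul (hFyv p e₃)).deriv
      have d2 : pdt (fun q => (F q e₁) ^ 2 * F q e₂) p
          = ((2 : ℕ) : ℝ) * F p e₁ ^ (2 - 1) * M p e₃ e₁ * F p e₂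
            + F p e₁ ^ 2 * M p e₃ e₂ :=
        (((hFtv p e₁).pow 2).mul (hFtv p e₂)).deriv
      rw [d1, d2]
      push_cast
      linear_combination (2 * F p e₁) * h p + F p e₁ ^ 2 * hsym p e₂ e₃
    · rw [hpdx, hpdy, hpdt]
      have d1 : pdx (fun q => (F q e₂) ^ 2 * F q e₃) p
          = ((2 : ℕ) : ℝ) * F p e₂ ^ (2 - 1) * M p e₁ e₂ * F p e₃
            + F p e₂ ^ 2 * M p e₁ e₃ :=
        (((hFxv p e₂).pow 2).mul (hFxv p e₃)).deriv
      have d2 : pdt (fun q => (F q e₂) ^ 2 * F q e₁) p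
          = ((2 : ℕ) : ℝ) * F p e₂ ^ (2 - 1) * M p e₃ e₂ * F p e₁
            + F p e₂ ^ 2 * M p e₃ e₁ :=
        (((hFtv p e₂).pow 2).mul (hFtv p e₁)).deriv
      rw [d1, d2]
      push_cast
      linear_combination (2 * F p e₂) * h p + (2 * F p e₂ * F p e₃) * hsym p e₁ e₂
        + F p e₂ ^ 2 * hsym p e₁ e₃
    · rw [hpdx, hpdy, hpdt]
      have d1 : pdx (fun q => (F q e₃) ^ 2 * F q e₂) p
          = ((2 : ℕ) : ℝ) * F p e₃ ^ (2 - 1) * M p e₁ e₃ * F p e₂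
            + F p e₃ ^ 2 * M p e₁ e₂ :=
        (((hFxv p e₃).pow 2).mul (hFxv p e₂)).deriv
      have d2 : pdy (fun q => (F q e₃) ^ 2 * F q e₁) p
          = ((2 : ℕ) : ℝ) * F p e₃ ^ (2 - 1) * M p e₂ e₃ * F p e₁
            + F p e₃ ^ 2 * M p e₂ e₁ :=
        (((hFyv p e₃).pow 2).mul (hFyv p e₁)).deriv
      rw [d1, d2]
      push_cast
      linear_combination (2 * F p e₃) * h p + (2 * F p e₂ * F p e₃) * hsym p e₁ e₃
        + F p e₃ ^ 2 * hsym p e₁ e₂ + (2 * F p e₁ * F p e₃) * hsym p e₂ e₃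
  · intro p₁ p₂ p₃
    refine ⟨?_, ?_, ?_⟩ <;>
    · simp [Matrix.adjugate_fin_three, Matrix.mulVec, dotProduct,
        Fin.sum_univ_three]
      ring
end
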